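/- arXiv:1507.00532 — 4 statements merged into one kernel-verified Lean document; each statement's English description precedes it below -/
import Mathlib

section
/- For every n ≥ 1 and E dividing n, the number of subgroups of exponent E of Z_n × Z_n equals the number of cyclic subgroups of Z_E × Z_E. -/
namespace Stmt14

variable {E : ℕ}

def pair (v w : ZMod E × ZMod E) : ZMod E := v.1 * w.2 - v.2 * w.1

def perp (E : ℕ) (H : AddSubgroup (ZMod E × ZMod E)) : AddSubgroup (ZMod E × ZMod E) where
  carrier := {w | ∀ v ∈ H, pair v w = 0}
  zero_mem' := by intro v _; simp [pair]
  add_mem' := by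
    intro a b ha hb v hv
    have h1 := ha v hv; have h2 := hb v hv
    simp only [pair, Prod.fst_add, Prod.snd_add] at *
    linear_combination h1 + h2
  neg_mem' := by
    intro a ha v hv
    have h1 := ha v hv
    simp only [pair, Prod.fst_neg, Prod.snd_neg] at *
    linear_combination -h1

lemma mem_perp {H : AddSubgroup (ZMod E × ZMod E)} {w : ZMod E × ZMod E} :
    w ∈ perp E H ↔ ∀ v ∈ H, pair v w = 0 := Iff.rfl

lemma smul_E (x : ZMod E × ZMod E) : E • x = 0 := by
  ext <;> simp [nsmul_eq_mul, ZMod.natCast_self]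

lemma sep {Q : Type*} [AddCommGroup Q] [Finite Q] (E : ℕ) [NeZero E]
    (hQ : ∀ q : Q, E • q = 0) {q : Q} (hq : q ≠ 0) :
    ∃ φ : Q →+ ZMod E, φ q ≠ 0 := by
  classical
  obtain ⟨ι, _, m, hm, ⟨e⟩⟩ := AddCommGroup.equiv_directSum_zmod_of_finite' Q
  obtain ⟨i, hi⟩ : ∃ i, e q i ≠ 0 := by
    by_contra h
    push_neg at h
    apply hq
    apply e.injective
    rw [map_zero]
    exact DFinsupp.ext h
  have hmE : m i ∣ E := by
    have h1 : E • e.symm (DirectSum.of (fun i => ZMod (m i)) i 1) = 0 := hQ _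
    have h2 : E • DirectSum.of (fun i => ZMod (m i)) i (1 : ZMod (m i)) = 0 := by
      apply e.symm.injective
      rw [map_nsmul, h1, map_zero]
    have h3 : E • (1 : ZMod (m i)) = 0 := by
      have h4 : (DFinsupp.evalAddMonoidHom (β := fun i => ZMod (m i)) i)
          (E • DirectSum.of (fun i => ZMod (m i)) i (1 : ZMod (m i))) = 0 := by
        rw [h2]; simp
      rw [map_nsmul] at h4
      have h5 : (DFinsupp.evalAddMonoidHom (β := fun i => ZMod (m i)) i)
          (DirectSum.of (fun i => ZMod (m i)) i (1 : ZMod (m i))) = 1 :=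
        DirectSum.of_eq_same i 1
      rw [h5] at h4
      exact h4
    rwa [nsmul_eq_mul, mul_one, ZMod.natCast_eq_zero_iff] at h3
  have hmpos : 0 < m i := lt_trans one_pos (hm i)
  have : NeZero (m i) := ⟨hmpos.ne'⟩
  have hg : ((AddMonoidHom.mulLeft ((E / m i : ℕ) : ZMod E)).comp
      (Int.castAddHom (ZMod E))) (m i) = 0 := by
    simp only [AddMonoidHom.comp_apply, Int.coe_castAddHom, AddMonoidHom.coe_mulLeft,
      Int.cast_natCast]
    rw [← Nat.cast_mul, Nat.div_mul_cancel hmE, ZMod.natCast_self]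
  set f : ZMod (m i) →+ ZMod E := ZMod.lift (m i) ⟨_, hg⟩ with hf
  have hfval : ∀ k : ℕ, f (k : ZMod (m i)) = ((E / m i * k : ℕ) : ZMod E) := by
    intro k
    have h4 : ((k : ℤ) : ZMod (m i)) = (k : ZMod (m i)) := by push_cast; rfl
    rw [← h4, ZMod.lift_coe]
    simp only [AddMonoidHom.comp_apply, Int.coe_castAddHom, AddMonoidHom.coe_mulLeft,
      Int.cast_natCast]
    push_cast
    ring
  have hfinj : ∀ x : ZMod (m i), x ≠ 0 → f x ≠ 0 := by
    intro x hx hfx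
    have hxv : x = ((x.val : ℕ) : ZMod (m i)) :=
      ((ZMod.natCast_val x).trans (ZMod.cast_id _ x)).symm
    rw [hxv, hfval, ZMod.natCast_eq_zero_iff] at hfx
    set D := E / m i with hDdef
    obtain ⟨c, hc⟩ := hfx
    have hD : 0 < D := Nat.div_pos (Nat.le_of_dvd (Nat.pos_of_ne_zero (NeZero.ne E)) hmE) hmpos
    have hE' : E = D * m i := (Nat.div_mul_cancel hmE).symm
    rw [hE'] at hc
    have hc3 : x.val = m i * c := Nat.eq_of_mul_eq_mul_left hD (by linarith [hc])
    have hlt := ZMod.val_lt x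
    have : x.val = 0 := Nat.eq_zero_of_dvd_of_lt ⟨c, hc3⟩ hlt
    exact hx ((ZMod.val_eq_zero x).mp this)
  refine ⟨f.comp ((DFinsupp.evalAddMonoidHom i).comp e.toAddMonoidHom), ?_⟩
  exact hfinj (e q i) hi

lemma le_perp_perp (H : AddSubgroup (ZMod E × ZMod E)) : H ≤ perp E (perp E H) := by
  intro v hv w hw
  have h := hw v hv
  simp only [pair] at *
  linear_combination -h

lemma hom_smul [NeZero E] (ψ : (ZMod E × ZMod E) →+ ZMod E) (c : ZMod E) (x : ZMod E × ZMod E) :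
    ψ (c • x) = c * ψ x := by
  have h1 : c = ((c.val : ℕ) : ZMod E) := ((ZMod.natCast_val c).trans (ZMod.cast_id _ c)).symm
  rw [h1, Nat.cast_smul_eq_nsmul, map_nsmul, nsmul_eq_mul]

lemma hom_eval [NeZero E] (ψ : (ZMod E × ZMod E) →+ ZMod E) (u : ZMod E × ZMod E) :
    ψ u = u.1 * ψ (1, 0) + u.2 * ψ (0, 1) := by
  have hdec : u = u.1 • ((1 : ZMod E), (0 : ZMod E)) + u.2 • ((0 : ZMod E), (1 : ZMod E)) := by
    ext <;> simp
  conv_lhs => rw [hdec]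
  rw [map_add, hom_smul, hom_smul]

lemma perp_perp [NeZero E] (H : AddSubgroup (ZMod E × ZMod E)) : perp E (perp E H) = H := by
  refine le_antisymm ?_ (le_perp_perp H)
  intro v hv
  by_contra hvH
  have hQ : ∀ q : (ZMod E × ZMod E) ⧸ H, E • q = 0 := by
    intro q
    obtain ⟨x, rfl⟩ := QuotientAddGroup.mk'_surjective H q
    rw [← map_nsmul, smul_E, map_zero]
  have hq : (QuotientAddGroup.mk' H) v ≠ 0 := by
    rw [ne_eq, QuotientAddGroup.mk'_apply, QuotientAddGroup.eq_zero_iff]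
    exact hvH
  obtain ⟨φ, hφ⟩ := sep E hQ hq
  set ψ : (ZMod E × ZMod E) →+ ZMod E := φ.comp (QuotientAddGroup.mk' H) with hψdef
  have hw : (-ψ (0, 1), ψ (1, 0)) ∈ perp E H := by
    intro u hu
    have h0 : ψ u = 0 := by
      have : (QuotientAddGroup.mk' H) u = 0 := by
        rw [QuotientAddGroup.mk'_apply, QuotientAddGroup.eq_zero_iff]
        exact hu
      simp [hψdef, AddMonoidHom.comp_apply, this]
    have := hom_eval ψ u
    simp only [pair]
    linear_combination this.symm.trans h0
  have hz := hv _ hw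
  simp only [pair] at hz
  have hvψ := hom_eval ψ v
  have : ψ v = 0 := by linear_combination -hz - (-hvψ)
  exact hφ this

def phi (g : ZMod E × ZMod E) : (ZMod E × ZMod E) →+ ZMod E :=
  AddMonoidHom.mk' (fun w => pair g w)
    (by intro a b; simp only [pair, Prod.fst_add, Prod.snd_add]; ring)

lemma phi_apply (g w : ZMod E × ZMod E) : phi g w = pair g w := rfl

lemma zmultiples_le_ker (g : ZMod E × ZMod E) :
    AddSubgroup.zmultiples g ≤ (phi g).ker := by
  intro v hv
  obtain ⟨k, rfl⟩ := AddSubgroup.mem_zmultiples_iff.mp hv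
  have : phi g g = 0 := by simp [phi_apply, pair, mul_comm]
  rw [AddMonoidHom.mem_ker, map_zsmul, this, smul_zero]

lemma perp_zmultiples (g : ZMod E × ZMod E) :
    perp E (AddSubgroup.zmultiples g) = (phi g).ker := by
  ext w
  constructor
  · intro h
    exact h g (AddSubgroup.mem_zmultiples g)
  · intro h v hv
    obtain ⟨k, rfl⟩ := AddSubgroup.mem_zmultiples_iff.mp hv
    have h0 : pair g w = 0 := h
    show pair (k • g) w = 0
    simp only [pair, Prod.smul_fst, Prod.smul_snd] at h0 ⊢
    rw [zsmul_eq_mul, zsmul_eq_mul]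
    linear_combination (k : ZMod E) * h0

lemma range_phi_top [NeZero E] {g : ZMod E × ZMod E} (hg : addOrderOf g = E) :
    (phi g).range = ⊤ := by
  set S := (phi g).range with hS
  have h1 : g.1 ∈ S := ⟨(0, 1), by simp [phi_apply, pair]⟩
  have h2 : g.2 ∈ S := ⟨(-1, 0), by simp [phi_apply, pair]⟩
  set s := Nat.card S with hs
  have hsmul : ∀ x ∈ S, s • x = 0 := by
    intro x hx
    have h3 : s • (⟨x, hx⟩ : S) = 0 := card_nsmul_eq_zero'
    have h4 := congrArg (AddSubgroup.subtype S) h3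
    simpa using h4
  have hsg : s • g = 0 := by
    ext
    · simpa using hsmul g.1 h1
    · simpa using hsmul g.2 h2
  have hEs : E ∣ s := hg ▸ addOrderOf_dvd_of_nsmul_eq_zero hsg
  have hsE : s ∣ E := by
    have h5 := AddSubgroup.card_addSubgroup_dvd_card S
    rwa [Nat.card_zmod] at h5
  have hfin : Finite S := Subtype.finite
  apply AddSubgroup.eq_top_of_card_eq
  rw [← hs, Nat.dvd_antisymm hsE hEs, Nat.card_zmod]

lemma zmultiples_eq_ker [NeZero E] {g : ZMod E × ZMod E} (hg : addOrderOf g = E) :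
    AddSubgroup.zmultiples g = (phi g).ker := by
  have hcard : Nat.card (phi g).ker = E := by
    have h1 := AddSubgroup.card_eq_card_quotient_mul_card_addSubgroup (phi g).ker
    have h2 : Nat.card ((ZMod E × ZMod E) ⧸ (phi g).ker) = E := by
      rw [Nat.card_congr (QuotientAddGroup.quotientKerEquivRange (phi g)).toEquiv,
        range_phi_top hg, AddSubgroup.card_top, Nat.card_zmod]
    have h3 : Nat.card (ZMod E × ZMod E) = E * E := by
      simp [Nat.card_prod, Nat.card_zmod]
    rw [h2, h3] at h1
    have hEpos : 0 < E := Nat.pos_of_ne_zero (NeZero.ne E)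
    exact (Nat.eq_of_mul_eq_mul_left hEpos h1.symm)
  have hcard2 : Nat.card (AddSubgroup.zmultiples g) = E := by
    rw [Nat.card_zmultiples, hg]
  exact AddSubgroup.eq_of_le_of_card_ge (zmultiples_le_ker g) (by rw [hcard, hcard2])

lemma isAddCyclic_zmultiples {G : Type*} [AddGroup G] (g : G) :
    IsAddCyclic (AddSubgroup.zmultiples g) := by
  refine ⟨⟨⟨g, AddSubgroup.mem_zmultiples g⟩, ?_⟩⟩
  rintro ⟨x, hx⟩
  obtain ⟨k, rfl⟩ := AddSubgroup.mem_zmultiples_iff.mp hx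
  exact ⟨k, Subtype.ext (by simp)⟩

lemma cyclic_perp [NeZero E] {H : AddSubgroup (ZMod E × ZMod E)}
    (hH : AddMonoid.exponent H = E) : IsAddCyclic (perp E H) := by
  have hfin : Finite H := Subtype.finite
  obtain ⟨h0, hh0⟩ := AddMonoid.exists_addOrderOf_eq_exponent (G := H)
    AddMonoid.ExponentExists.of_finite
  have hh : addOrderOf (h0 : ZMod E × ZMod E) = E := by
    rw [AddSubgroup.addOrderOf_coe, hh0, hH]
  have hle : perp E H ≤ AddSubgroup.zmultiples (h0 : ZMod E × ZMod E) := by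
    intro w hw
    rw [zmultiples_eq_ker hh]
    exact hw (h0 : ZMod E × ZMod E) h0.2
  have : IsAddCyclic (AddSubgroup.zmultiples (h0 : ZMod E × ZMod E)) :=
    isAddCyclic_zmultiples _
  exact AddSubgroup.isAddCyclic_of_le hle

lemma exp_dvd [NeZero E] (S : AddSubgroup (ZMod E × ZMod E)) : AddMonoid.exponent S ∣ E := by
  apply AddMonoid.exponent_dvd_of_forall_nsmul_eq_zero
  intro x
  exact Subtype.ext (by rw [AddSubgroup.coe_nsmul]; exact smul_E (x : ZMod E × ZMod E))

lemma exp_perp [NeZero E] {K : AddSubgroup (ZMod E × ZMod E)} (hK : IsAddCyclic K) :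
    AddMonoid.exponent (perp E K) = E := by
  classical
  set d := AddMonoid.exponent (perp E K) with hd
  have hfin : Finite (perp E K) := Subtype.finite
  have hdvd : d ∣ E := exp_dvd _
  have hd0 : d ≠ 0 := AddMonoid.ExponentExists.of_finite.exponent_ne_zero
  have hdsmul : ∀ w ∈ perp E K, (d : ZMod E) * w.1 = 0 ∧ (d : ZMod E) * w.2 = 0 := by
    intro w hw
    have h1 : d • (⟨w, hw⟩ : perp E K) = 0 := AddMonoid.exponent_nsmul_eq_zero _
    have h2 : d • w = 0 := congrArg Subtype.val h1
    rw [Prod.ext_iff] at h2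
    constructor
    · rw [← nsmul_eq_mul]; exact h2.1
    · rw [← nsmul_eq_mul]; exact h2.2
  set m := E / d with hm
  have hmd : m * d = E := Nat.div_mul_cancel hdvd
  have hm0 : m ≠ 0 := by
    intro h
    rw [h, zero_mul] at hmd
    exact (NeZero.ne E) hmd.symm
  have : NeZero m := ⟨hm0⟩
  -- all of the m-torsion of the ambient group is contained in K
  have ha : ∀ a b : ℕ, (((a * d : ℕ) : ZMod E), ((b * d : ℕ) : ZMod E)) ∈ K := by
    intro a b
    rw [← perp_perp (E := E) K]
    intro w hw
    obtain ⟨h1, h2⟩ := hdsmul w hw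
    simp only [pair]
    push_cast
    linear_combination (b : ZMod E) * h1 - (a : ZMod E) * h2
  -- an injection of `ZMod m × ZMod m` into the m-torsion of K
  have hKfin : Finite K := Subtype.finite
  have hcyc : IsAddCyclic K := hK
  have hdv : ∀ k : ℕ, (E : ℕ) ∣ m * (k * d) := fun k => ⟨k, by rw [← hmd]; ring⟩
  let F : ZMod m × ZMod m → {x : K // m • x = 0} := fun p =>
    ⟨⟨(((p.1.val * d : ℕ) : ZMod E), ((p.2.val * d : ℕ) : ZMod E)), ha _ _⟩, by
      apply Subtype.ext
      rw [AddSubgroup.coe_nsmul]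
      apply Prod.ext <;>
      · show m • (((_ * d : ℕ) : ZMod E)) = 0
        rw [nsmul_eq_mul, ← Nat.cast_mul, ZMod.natCast_eq_zero_iff]
        exact hdv _⟩
  have hFinj : Function.Injective F := by
    intro p q hpq
    have h3 : ((((F p : {x : K // m • x = 0}) : K) : ZMod E × ZMod E)) =
        (((F q : {x : K // m • x = 0}) : K) : ZMod E × ZMod E) := by rw [hpq]
    simp only [F] at h3
    rw [Prod.ext_iff] at h3
    obtain ⟨h4, h5⟩ := h3
    have key : ∀ u v : ZMod m, ((u.val * d : ℕ) : ZMod E) = ((v.val * d : ℕ) : ZMod E) → u = v := by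
      intro u v huv
      rw [ZMod.natCast_eq_natCast_iff] at huv
      rw [← hmd] at huv
      have h6 : u.val ≡ v.val [MOD m] := Nat.ModEq.mul_right_cancel' hd0 huv
      have h7 : u.val = v.val := by
        have hu := ZMod.val_lt u
        have hv := ZMod.val_lt v
        rwa [Nat.ModEq, Nat.mod_eq_of_lt hu, Nat.mod_eq_of_lt hv] at h6
      exact ZMod.val_injective m h7
    exact Prod.ext (key _ _ h4) (key _ _ h5)
  -- cardinality bound from cyclicity
  have hlt : Nat.card (ZMod m × ZMod m) ≤ Nat.card {x : K // m • x = 0} :=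
    Nat.card_le_card_of_injective F hFinj
  have hcard1 : Nat.card (ZMod m × ZMod m) = m * m := by simp [Nat.card_zmod]
  letI : Fintype K := Fintype.ofFinite _
  have hbound : Nat.card {x : K // m • x = 0} ≤ m := by
    rw [Nat.card_eq_fintype_card, Fintype.card_subtype]
    exact IsAddCyclic.card_nsmul_eq_zero_le (Nat.pos_of_ne_zero hm0)
  have hmle : m * m ≤ m := by rw [← hcard1]; exact hlt.trans hbound
  have hm1 : m = 1 := by nlinarith [Nat.pos_of_ne_zero hm0]
  rw [← hmd, hm1, one_mul]

noncomputable def mainEquiv (E : ℕ) [NeZero E] :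
    {H : AddSubgroup (ZMod E × ZMod E) // AddMonoid.exponent H = E} ≃
      {K : AddSubgroup (ZMod E × ZMod E) // IsAddCyclic K} where
  toFun H := ⟨perp E H.1, cyclic_perp H.2⟩
  invFun K := ⟨perp E K.1, exp_perp K.2⟩
  left_inv H := Subtype.ext (perp_perp H.1)
  right_inv K := Subtype.ext (perp_perp K.1)

variable {n : ℕ}

def jmap (n E : ℕ) (hE : E ∣ n) : ZMod E →+ ZMod n :=
  ZMod.lift E ⟨(AddMonoidHom.mulLeft ((n / E : ℕ) : ZMod n)).comp (Int.castAddHom (ZMod n)), by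
    simp only [AddMonoidHom.comp_apply, Int.coe_castAddHom, AddMonoidHom.coe_mulLeft,
      Int.cast_natCast]
    rw [← Nat.cast_mul, Nat.div_mul_cancel hE, ZMod.natCast_self]⟩

lemma jmap_natCast (hE : E ∣ n) (k : ℕ) :
    jmap n E hE (k : ZMod E) = ((n / E * k : ℕ) : ZMod n) := by
  have h4 : ((k : ℤ) : ZMod E) = (k : ZMod E) := by push_cast; rfl
  rw [jmap, ← h4, ZMod.lift_coe]
  simp only [AddMonoidHom.comp_apply, Int.coe_castAddHom, AddMonoidHom.coe_mulLeft,
    Int.cast_natCast]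
  push_cast
  ring

lemma jmap_inj [NeZero n] [NeZero E] (hE : E ∣ n) : Function.Injective (jmap n E hE) := by
  rw [injective_iff_map_eq_zero]
  intro x hx
  have hxv : x = ((x.val : ℕ) : ZMod E) := ((ZMod.natCast_val x).trans (ZMod.cast_id _ x)).symm
  rw [hxv, jmap_natCast, ZMod.natCast_eq_zero_iff] at hx
  have hD : 0 < n / E :=
    Nat.div_pos (Nat.le_of_dvd (Nat.pos_of_ne_zero (NeZero.ne n)) hE)
      (Nat.pos_of_ne_zero (NeZero.ne E))
  obtain ⟨c, hc⟩ := hx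
  have hc1 : n / E * x.val = n / E * (E * c) := by
    rw [hc]
    conv_lhs => rw [← Nat.div_mul_cancel hE]
    ring
  have hc2 : x.val = E * c := Nat.eq_of_mul_eq_mul_left hD hc1
  have : x.val = 0 := Nat.eq_zero_of_dvd_of_lt ⟨c, hc2⟩ (ZMod.val_lt x)
  rw [hxv, this, Nat.cast_zero]

lemma smul_E_zmodE [NeZero E] (x : ZMod E) : E • x = 0 := by
  rw [nsmul_eq_mul, ZMod.natCast_self, zero_mul]

lemma mem_range_jmap [NeZero n] [NeZero E] (hE : E ∣ n) (y : ZMod n) :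
    y ∈ (jmap n E hE).range ↔ E • y = 0 := by
  constructor
  · rintro ⟨x, rfl⟩
    rw [← map_nsmul, smul_E_zmodE, map_zero]
  · intro hy
    have hyv : y = ((y.val : ℕ) : ZMod n) := ((ZMod.natCast_val y).trans (ZMod.cast_id _ y)).symm
    have h1 : ((E * y.val : ℕ) : ZMod n) = 0 := by
      rw [Nat.cast_mul, ← nsmul_eq_mul, ← hyv]
      exact_mod_cast hy
    rw [ZMod.natCast_eq_zero_iff] at h1
    obtain ⟨c, hc⟩ := h1
    have hc2 : E * y.val = E * (n / E * c) := by
      rw [hc]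
      conv_lhs => rw [← Nat.mul_div_cancel' hE]
      ring
    have hk : y.val = n / E * c :=
      Nat.eq_of_mul_eq_mul_left (Nat.pos_of_ne_zero (NeZero.ne E)) hc2
    set k := c
    exact ⟨(k : ZMod E), by rw [jmap_natCast, ← hk, ← hyv]⟩

/-- The doubled injection `ZMod E × ZMod E →+ ZMod n × ZMod n`. -/
def Jmap (n E : ℕ) (hE : E ∣ n) : ZMod E × ZMod E →+ ZMod n × ZMod n :=
  (jmap n E hE).prodMap (jmap n E hE)

lemma Jmap_inj [NeZero n] [NeZero E] (hE : E ∣ n) : Function.Injective (Jmap n E hE) := by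
  intro x y hxy
  have h1 : jmap n E hE x.1 = jmap n E hE y.1 := congrArg Prod.fst hxy
  have h2 : jmap n E hE x.2 = jmap n E hE y.2 := congrArg Prod.snd hxy
  exact Prod.ext (jmap_inj hE h1) (jmap_inj hE h2)

lemma le_range_Jmap [NeZero n] [NeZero E] (hE : E ∣ n)
    {H : AddSubgroup (ZMod n × ZMod n)} (hH : AddMonoid.exponent H = E) :
    H ≤ (Jmap n E hE).range := by
  intro x hx
  have h1 : E • (⟨x, hx⟩ : H) = 0 := by
    rw [← hH]; exact AddMonoid.exponent_nsmul_eq_zero _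
  have h2 : E • x = 0 := congrArg Subtype.val h1
  rw [Prod.ext_iff] at h2
  obtain ⟨u, hu⟩ := (mem_range_jmap hE x.1).mpr h2.1
  obtain ⟨v, hv⟩ := (mem_range_jmap hE x.2).mpr h2.2
  exact ⟨(u, v), Prod.ext hu hv⟩

noncomputable def transferEquiv [NeZero n] [NeZero E] (hE : E ∣ n) :
    {H : AddSubgroup (ZMod E × ZMod E) // AddMonoid.exponent H = E} ≃
      {H : AddSubgroup (ZMod n × ZMod n) // AddMonoid.exponent H = E} where
  toFun H := ⟨AddSubgroup.map (Jmap n E hE) H.1, by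
    rw [← AddMonoid.exponent_eq_of_addEquiv
      (AddSubgroup.equivMapOfInjective H.1 (Jmap n E hE) (Jmap_inj hE))]
    exact H.2⟩
  invFun H := ⟨AddSubgroup.comap (Jmap n E hE) H.1, by
    have hmc : AddSubgroup.map (Jmap n E hE) (AddSubgroup.comap (Jmap n E hE) H.1) = H.1 :=
      AddSubgroup.map_comap_eq_self (le_range_Jmap hE H.2)
    rw [AddMonoid.exponent_eq_of_addEquiv
      (AddSubgroup.equivMapOfInjective _ (Jmap n E hE) (Jmap_inj hE)), hmc]
    exact H.2⟩
  left_inv H := Subtype.ext (AddSubgroup.comap_map_eq_self_of_injective (Jmap_inj hE) H.1)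
  right_inv H := Subtype.ext (AddSubgroup.map_comap_eq_self (le_range_Jmap hE H.2))

end Stmt14

theorem stmt_14 (n E : ℕ) (hn : 1 ≤ n) (hE : E ∣ n) :
    Nat.card {H : AddSubgroup (ZMod n × ZMod n) // AddMonoid.exponent H = E} =
      Nat.card {H : AddSubgroup (ZMod E × ZMod E) // IsAddCyclic H} := by
  have h1 : NeZero n := ⟨by omega⟩
  have h2 : NeZero E := ⟨(Nat.pos_of_dvd_of_pos hE hn).ne'⟩
  exact Nat.card_congr ((Stmt14.transferEquiv hE).symm.trans (Stmt14.mainEquiv E))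
end

section
/- For every m, n ≥ 1, the sum of the exponents of all subgroups of Z_m × Z_n equals σ(m)·σ(n), where σ is the sum-of-divisors function. -/
open AddSubgroup Finset

lemma int_mem_zmultiples_iff {N : ℕ} [NeZero N] {b : ℕ} (hb : b ∣ N) {j : ℤ} :
    ((j : ZMod N)) ∈ zmultiples ((b : ℕ) : ZMod N) ↔ (b : ℤ) ∣ j := by
  rw [mem_zmultiples_iff]
  constructor
  · rintro ⟨k, hk⟩
    have h1 : ((k * b - j : ℤ) : ZMod N) = 0 := by
      push_cast
      rw [← hk, zsmul_eq_mul]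
      ring
    rw [ZMod.intCast_zmod_eq_zero_iff_dvd] at h1
    have hbN : (b : ℤ) ∣ (N : ℤ) := Int.natCast_dvd_natCast.2 hb
    have h2 : (b : ℤ) ∣ k * b - j := dvd_trans hbN h1
    have h3 : (b : ℤ) ∣ k * b := Dvd.intro_left k rfl
    simpa using dvd_sub h3 h2
  · rintro ⟨t, rfl⟩
    exact ⟨t, by rw [zsmul_eq_mul]; push_cast; ring⟩

lemma nat_mem_zmultiples_iff {N : ℕ} [NeZero N] {b : ℕ} (hb : b ∣ N) {j : ℕ} :
    (((j : ℕ) : ZMod N)) ∈ zmultiples ((b : ℕ) : ZMod N) ↔ b ∣ j := by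
  have h := int_mem_zmultiples_iff (N := N) hb (j := (j : ℤ))
  rw [Int.natCast_dvd_natCast] at h
  rw [← h]
  norm_cast

lemma zmod_addSubgroup (N : ℕ) [NeZero N] (S : AddSubgroup (ZMod N)) :
    ∃ b : ℕ, 0 < b ∧ b ∣ N ∧ S = zmultiples ((b : ℕ) : ZMod N) := by
  obtain ⟨a, ha⟩ := Int.subgroup_cyclic (S.comap (Int.castAddHom (ZMod N)))
  have hsurj : Function.Surjective (Int.castAddHom (ZMod N)) := ZMod.intCast_surjective
  have hS : S = AddSubgroup.map (Int.castAddHom (ZMod N)) (AddSubgroup.closure {a}) := by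
    rw [← ha, AddSubgroup.map_comap_eq_self_of_surjective hsurj]
  rw [AddMonoidHom.map_closure, Set.image_singleton, ← zmultiples_eq_closure] at hS
  have hcast : (Int.castAddHom (ZMod N)) a = ((a : ℤ) : ZMod N) := rfl
  rw [hcast] at hS
  set a' : ℕ := a.natAbs with ha'
  have hS' : S = zmultiples ((a' : ℕ) : ZMod N) := by
    rw [hS]
    rcases Int.natAbs_eq a with h | h
    · rw [h, Int.cast_natCast]
    · rw [h, Int.cast_neg, Int.cast_natCast]
      exact zmultiples_neg
  refine ⟨N.gcd a', ?_, Nat.gcd_dvd_left _ _, ?_⟩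
  · exact Nat.gcd_pos_of_pos_left _ (Nat.pos_of_ne_zero (NeZero.ne N))
  · rw [hS']
    apply le_antisymm
    · rw [zmultiples_le]
      exact (nat_mem_zmultiples_iff (Nat.gcd_dvd_left _ _)).2 (Nat.gcd_dvd_right _ _)
    · rw [zmultiples_le, mem_zmultiples_iff]
      refine ⟨Nat.gcdB N a', ?_⟩
      have hbez := Nat.gcd_eq_gcd_ab N a'
      have h0 : ((N * Nat.gcdA N a' + a' * Nat.gcdB N a' : ℤ) : ZMod N) =
          Nat.gcdB N a' • ((a' : ℕ) : ZMod N) := by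
        rw [zsmul_eq_mul]
        push_cast
        rw [ZMod.natCast_self]
        ring
      rw [← hbez] at h0
      rw [← h0, Int.cast_natCast]

lemma lcm_div_div {n x y : ℕ} (hn : n ≠ 0) (hx : x ∣ n) (hy : y ∣ n) :
    Nat.lcm (n / x) (n / y) = n / Nat.gcd x y := by
  have hx0 : x ≠ 0 := fun h => hn (by simpa [h] using hx)
  have hy0 : y ≠ 0 := fun h => hn (by simpa [h] using hy)
  set g := Nat.gcd x y with hgdef
  have hg : g ∣ n := dvd_trans (Nat.gcd_dvd_left x y) hx
  have hg0 : g ≠ 0 := Nat.gcd_ne_zero_left hx0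
  apply Nat.dvd_antisymm
  · apply Nat.lcm_dvd
    · rw [Nat.div_dvd_iff_dvd_mul hx (Nat.pos_of_ne_zero hx0)]
      obtain ⟨t, ht⟩ : g ∣ x := Nat.gcd_dvd_left x y
      rw [show x * (n / g) = g * (n / g) * t from by nth_rewrite 1 [ht]; ring,
        Nat.mul_div_cancel' hg]
      exact Dvd.intro t rfl
    · rw [Nat.div_dvd_iff_dvd_mul hy (Nat.pos_of_ne_zero hy0)]
      obtain ⟨t, ht⟩ : g ∣ y := Nat.gcd_dvd_right x y
      rw [show y * (n / g) = g * (n / g) * t from by nth_rewrite 1 [ht]; ring,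
        Nat.mul_div_cancel' hg]
      exact Dvd.intro t rfl
  · rw [Nat.div_dvd_iff_dvd_mul hg (Nat.pos_of_ne_zero hg0)]
    have h1 : n ∣ Nat.lcm (n / x) (n / y) * x := by
      obtain ⟨t, ht⟩ := Nat.dvd_lcm_left (n / x) (n / y)
      rw [ht, show n / x * t * x = n / x * x * t from by ring, Nat.div_mul_cancel hx]
      exact Dvd.intro t rfl
    have h2 : n ∣ Nat.lcm (n / x) (n / y) * y := by
      obtain ⟨t, ht⟩ := Nat.dvd_lcm_right (n / x) (n / y)
      rw [ht, show n / y * t * y = n / y * y * t from by ring, Nat.div_mul_cancel hy]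
      exact Dvd.intro t rfl
    have h3 := Nat.dvd_gcd h1 h2
    rwa [Nat.gcd_mul_left, Nat.mul_comm] at h3

lemma lcm_lcm_eq {n b c : ℕ} (hn : n ≠ 0) (hb : b ∣ n) :
    Nat.lcm (n / Nat.gcd n c) (n / b) = n / Nat.gcd b c := by
  rw [lcm_div_div hn (Nat.gcd_dvd_left n c) hb]
  congr 1
  rw [Nat.gcd_comm (Nat.gcd n c) b, ← Nat.gcd_assoc, Nat.gcd_eq_left hb]

lemma exponent_closure_pair {G : Type*} [AddCommGroup G] (u v : G) :
    AddMonoid.exponent (AddSubgroup.closure ({u, v} : Set G)) =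
      Nat.lcm (addOrderOf u) (addOrderOf v) := by
  set L := Nat.lcm (addOrderOf u) (addOrderOf v) with hL
  apply Nat.dvd_antisymm
  · apply AddMonoid.exponent_dvd_of_forall_nsmul_eq_zero
    rintro ⟨x, hx⟩
    rw [AddSubgroup.mem_closure_pair] at hx
    obtain ⟨k, l, rfl⟩ := hx
    apply Subtype.ext
    show L • (k • u + l • v) = (0 : G)
    rw [smul_add, smul_comm L k, smul_comm L l,
      addOrderOf_dvd_iff_nsmul_eq_zero.mp (Nat.dvd_lcm_left _ _),
      addOrderOf_dvd_iff_nsmul_eq_zero.mp (Nat.dvd_lcm_right _ _)]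
    simp
  · apply Nat.lcm_dvd
    · have hu : u ∈ AddSubgroup.closure ({u, v} : Set G) :=
        AddSubgroup.subset_closure (by simp)
      have e : addOrderOf u = addOrderOf (⟨u, hu⟩ : AddSubgroup.closure ({u, v} : Set G)) :=
        addOrderOf_injective (AddSubgroup.closure ({u, v} : Set G)).subtype
          (AddSubgroup.subtype_injective _) ⟨u, hu⟩
      rw [e]
      exact AddMonoid.addOrder_dvd_exponent _
    · have hv : v ∈ AddSubgroup.closure ({u, v} : Set G) :=
        AddSubgroup.subset_closure (by simp)
      have e : addOrderOf v = addOrderOf (⟨v, hv⟩ : AddSubgroup.closure ({u, v} : Set G)) :=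
        addOrderOf_injective (AddSubgroup.closure ({u, v} : Set G)).subtype
          (AddSubgroup.subtype_injective _) ⟨v, hv⟩
      rw [e]
      exact AddMonoid.addOrder_dvd_exponent _

lemma sum_product_filter {α β M : Type*} [AddCommMonoid M] (s : Finset α) (t : Finset β)
    (p : α × β → Prop) [DecidablePred p] (f : α × β → M) :
    ∑ x ∈ (s ×ˢ t).filter p, f x = ∑ a ∈ s, ∑ b ∈ t.filter (fun b => p (a, b)), f (a, b) := by
  rw [Finset.sum_filter, Finset.sum_product]
  exact Finset.sum_congr rfl fun a _ => (Finset.sum_filter _ _).symm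

lemma key_identity (A n : ℕ) (hA : 0 < A) (hn : n ≠ 0) :
    ∑ b ∈ n.divisors, ∑ c ∈ (range b).filter (fun c => b ∣ A * c), Nat.lcm A (n / Nat.gcd b c)
      = A * ∑ d ∈ n.divisors, d := by
  have step1 : ∑ b ∈ n.divisors, ∑ c ∈ (range b).filter (fun c => b ∣ A * c),
      Nat.lcm A (n / Nat.gcd b c)
      = ∑ p ∈ (n.divisors ×ˢ range n).filter (fun p => p.2 < p.1 ∧ p.1 ∣ A * p.2),
          Nat.lcm A (n / Nat.gcd p.1 p.2) := by
    rw [sum_product_filter]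
    refine Finset.sum_congr rfl fun b hb => ?_
    have hbn : b ≤ n := Nat.le_of_dvd (Nat.pos_of_ne_zero hn) (Nat.mem_divisors.1 hb).1
    congr 1
    ext x
    simp only [Finset.mem_filter, Finset.mem_range]
    constructor
    · rintro ⟨h1, h2⟩; exact ⟨lt_of_lt_of_le h1 hbn, h1, h2⟩
    · rintro ⟨_, h2, h3⟩; exact ⟨h2, h3⟩
  rw [step1]
  have step2 : ∑ p ∈ (n.divisors ×ˢ range n).filter (fun p => p.2 < p.1 ∧ p.1 ∣ A * p.2),
      Nat.lcm A (n / Nat.gcd p.1 p.2)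
      = ∑ t ∈ (n.divisors ×ˢ n.divisors ×ˢ range n).filter
          (fun t => t.2.1 ∣ Nat.gcd A (n / t.1) ∧ t.2.2 < t.2.1 ∧ Nat.gcd t.2.1 t.2.2 = 1),
          Nat.lcm A (n / t.1) := by
    apply Finset.sum_nbij' (i := fun p => (Nat.gcd p.1 p.2, p.1 / Nat.gcd p.1 p.2,
        p.2 / Nat.gcd p.1 p.2)) (j := fun t => (t.1 * t.2.1, t.1 * t.2.2))
    · rintro ⟨b, c⟩ hp
      simp only [Finset.mem_filter, Finset.mem_product, Finset.mem_range,
        Nat.mem_divisors] at hp ⊢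
      obtain ⟨⟨⟨hbn, -⟩, hcn⟩, hcb, hbAc⟩ := hp
      have hb0 : b ≠ 0 := fun h => hn (by simpa [h] using hbn)
      set e := Nat.gcd b c with hedef
      have he0 : 0 < e := Nat.gcd_pos_of_pos_left _ (Nat.pos_of_ne_zero hb0)
      have heb : e ∣ b := Nat.gcd_dvd_left b c
      have hec : e ∣ c := Nat.gcd_dvd_right b c
      have hcop : Nat.Coprime (b / e) (c / e) := Nat.coprime_div_gcd_div_gcd he0
      have hb1Ac1 : b / e ∣ A * (c / e) := by
        have h1 : e * (b / e) ∣ e * (A * (c / e)) := by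
          rw [Nat.mul_div_cancel' heb, show e * (A * (c / e)) = A * (e * (c / e)) from by ring,
            Nat.mul_div_cancel' hec]
          exact hbAc
        exact (mul_dvd_mul_iff_left he0.ne').1 h1
      have hb1A : b / e ∣ A := hcop.dvd_of_dvd_mul_right hb1Ac1
      refine ⟨⟨⟨dvd_trans heb hbn, hn⟩, ⟨dvd_trans (Nat.div_dvd_of_dvd heb) hbn, hn⟩,
        lt_of_le_of_lt (Nat.div_le_self _ _) hcn⟩, ?_, ?_, hcop⟩
      · refine Nat.dvd_gcd hb1A ?_
        rw [Nat.dvd_div_iff_mul_dvd (dvd_trans heb hbn), Nat.mul_div_cancel' heb]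
        exact hbn
      · exact Nat.div_lt_div_of_lt_of_dvd heb hcb
    · rintro ⟨e, b₁, c₁⟩ ht
      simp only [Finset.mem_filter, Finset.mem_product, Finset.mem_range,
        Nat.mem_divisors] at ht ⊢
      obtain ⟨⟨⟨hen, -⟩, ⟨hb₁n, -⟩, hc₁n⟩, hb₁g, hc₁b₁, hcop⟩ := ht
      have he0 : 0 < e := Nat.pos_of_ne_zero (fun h => hn (by simpa [h] using hen))
      have hb₁ne : b₁ ∣ n / e := dvd_trans hb₁g (Nat.gcd_dvd_right _ _)
      have hben : e * b₁ ∣ n := by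
        rwa [← Nat.dvd_div_iff_mul_dvd hen]
      refine ⟨⟨⟨hben, hn⟩, ?_⟩, ?_, ?_⟩
      · calc e * c₁ < e * b₁ := mul_lt_mul_of_pos_left hc₁b₁ he0
          _ ≤ n := Nat.le_of_dvd (Nat.pos_of_ne_zero hn) hben
      · exact mul_lt_mul_of_pos_left hc₁b₁ he0
      · have h1 : b₁ ∣ A * c₁ := Dvd.dvd.mul_right (dvd_trans hb₁g (Nat.gcd_dvd_left _ _)) c₁
        rw [show A * (e * c₁) = e * (A * c₁) from by ring]
        exact mul_dvd_mul_left e h1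
    · rintro ⟨b, c⟩ hp
      exact Prod.ext (Nat.mul_div_cancel' (Nat.gcd_dvd_left b c))
        (Nat.mul_div_cancel' (Nat.gcd_dvd_right b c))
    · rintro ⟨e, b₁, c₁⟩ ht
      simp only [Finset.mem_filter, Finset.mem_product, Nat.mem_divisors] at ht
      obtain ⟨⟨⟨hen, -⟩, -⟩, -, -, hcop⟩ := ht
      have he0 : 0 < e := Nat.pos_of_ne_zero (fun h => hn (by simpa [h] using hen))
      have hg : Nat.gcd (e * b₁) (e * c₁) = e := by
        rw [Nat.gcd_mul_left, hcop, mul_one]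
      simp only [hg]
      exact Prod.ext rfl (Prod.ext (Nat.mul_div_cancel_left _ he0) (Nat.mul_div_cancel_left _ he0))
    · rintro ⟨b, c⟩ hp
      rfl
  rw [step2, sum_product_filter]
  have step3 : ∀ e ∈ n.divisors,
      (∑ x ∈ (n.divisors ×ˢ range n).filter
        (fun x => x.1 ∣ Nat.gcd A (n / e) ∧ x.2 < x.1 ∧ Nat.gcd x.1 x.2 = 1),
        Nat.lcm A (n / e))
      = Nat.gcd A (n / e) * Nat.lcm A (n / e) := by
    intro e he
    have hen : e ∣ n := (Nat.mem_divisors.1 he).1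
    set g := Nat.gcd A (n / e) with hgdef
    have hgn : g ∣ n := dvd_trans (Nat.gcd_dvd_right _ _) (Nat.div_dvd_of_dvd hen)
    rw [sum_product_filter]
    calc ∑ b₁ ∈ n.divisors, ∑ c₁ ∈ (range n).filter
          (fun c₁ => b₁ ∣ g ∧ c₁ < b₁ ∧ Nat.gcd b₁ c₁ = 1), Nat.lcm A (n / e)
        = ∑ b₁ ∈ n.divisors, (if b₁ ∣ g then Nat.totient b₁ * Nat.lcm A (n / e) else 0) := by
          refine Finset.sum_congr rfl fun b₁ hb₁ => ?_
          have hb₁n : b₁ ≤ n := Nat.le_of_dvd (Nat.pos_of_ne_zero hn) (Nat.mem_divisors.1 hb₁).1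
          by_cases hdg : b₁ ∣ g
          · rw [if_pos hdg]
            have hfe : (range n).filter (fun c₁ => b₁ ∣ g ∧ c₁ < b₁ ∧ Nat.gcd b₁ c₁ = 1)
                = (range b₁).filter (fun c₁ => Nat.gcd b₁ c₁ = 1) := by
              ext x
              simp only [Finset.mem_filter, Finset.mem_range]
              constructor
              · rintro ⟨-, -, h2, h3⟩; exact ⟨h2, h3⟩
              · rintro ⟨h2, h3⟩; exact ⟨lt_of_lt_of_le h2 hb₁n, hdg, h2, h3⟩
            rw [hfe, Finset.sum_const, smul_eq_mul]
            congr 1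
          · rw [if_neg hdg]
            convert Finset.sum_empty
            ext x
            simp only [Finset.mem_filter, Finset.mem_range, Finset.notMem_empty, iff_false]
            rintro ⟨-, h1, -⟩
            exact hdg h1
      _ = ∑ b₁ ∈ n.divisors.filter (· ∣ g), Nat.totient b₁ * Nat.lcm A (n / e) :=
          (Finset.sum_filter _ _).symm
      _ = ∑ b₁ ∈ g.divisors, Nat.totient b₁ * Nat.lcm A (n / e) := by
          rw [Nat.divisors_filter_dvd_of_dvd hn hgn]
      _ = g * Nat.lcm A (n / e) := by rw [← Finset.sum_mul, Nat.sum_totient]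
  rw [Finset.sum_congr rfl step3]
  have step4 : ∀ e ∈ n.divisors, Nat.gcd A (n / e) * Nat.lcm A (n / e) = A * (n / e) :=
    fun e _ => Nat.gcd_mul_lcm _ _
  rw [Finset.sum_congr rfl step4, ← Finset.mul_sum]
  congr 1
  exact Nat.sum_div_divisors n id

lemma pair_key_identity (A n : ℕ) (hA : 0 < A) (hn : n ≠ 0) :
    ∑ p ∈ (n.divisors ×ˢ range n).filter (fun p => p.2 < p.1 ∧ p.1 ∣ A * p.2),
      Nat.lcm A (n / Nat.gcd p.1 p.2) = A * ∑ d ∈ n.divisors, d := by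
  rw [← key_identity A n hA hn, sum_product_filter]
  refine Finset.sum_congr rfl fun b hb => ?_
  have hbn : b ≤ n := Nat.le_of_dvd (Nat.pos_of_ne_zero hn) (Nat.mem_divisors.1 hb).1
  congr 1
  ext x
  simp only [Finset.mem_filter, Finset.mem_range]
  constructor
  · rintro ⟨-, h2, h3⟩; exact ⟨h2, h3⟩
  · rintro ⟨h2, h3⟩; exact ⟨lt_of_lt_of_le h2 hbn, h2, h3⟩

section
variable {m n : ℕ} [NeZero m] [NeZero n]

def Fgrp (m n a b c : ℕ) [NeZero m] [NeZero n] : AddSubgroup (ZMod m × ZMod n) :=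
  AddSubgroup.closure {((a : ZMod m), (c : ZMod n)), ((0 : ZMod m), (b : ZMod n))}

lemma int_div_dvd {m a : ℕ} (ha : a ∣ m) (ha0 : a ≠ 0) {k : ℤ} (h : (m : ℤ) ∣ k * a) :
    ((m / a : ℕ) : ℤ) ∣ k := by
  obtain ⟨t, ht⟩ := h
  obtain ⟨s, hs⟩ := ha
  have hs' : (m / a : ℕ) = s := by rw [hs]; exact Nat.mul_div_cancel_left s (Nat.pos_of_ne_zero ha0)
  refine ⟨t, ?_⟩
  have ha0' : (a : ℤ) ≠ 0 := Int.natCast_ne_zero.mpr ha0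
  apply mul_left_cancel₀ ha0'
  rw [hs', show (a : ℤ) * k = k * a from by ring, ht, hs]
  push_cast
  ring

/-- first projection of Fgrp -/
lemma map_fst_Fgrp (a b c : ℕ) :
    (Fgrp m n a b c).map (AddMonoidHom.fst (ZMod m) (ZMod n)) = zmultiples ((a : ℕ) : ZMod m) := by
  rw [Fgrp, AddMonoidHom.map_closure]
  rw [Set.image_insert_eq, Set.image_singleton]
  show AddSubgroup.closure {(a : ZMod m), (0 : ZMod m)} = _
  rw [Set.insert_eq, AddSubgroup.closure_union, AddSubgroup.closure_singleton_zero,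
    sup_bot_eq, ← zmultiples_eq_closure]

/-- the "vertical part" of Fgrp -/
lemma comap_inr_Fgrp {a b c : ℕ} (ha : a ∣ m) (ha0 : a ≠ 0) (hb : b ∣ n)
    (hbc : b ∣ (m / a) * c) :
    (Fgrp m n a b c).comap (AddMonoidHom.inr (ZMod m) (ZMod n)) = zmultiples ((b : ℕ) : ZMod n) := by
  apply le_antisymm
  · intro y hy
    have hy' : ((0 : ZMod m), y) ∈ Fgrp m n a b c := hy
    rw [Fgrp, AddSubgroup.mem_closure_pair] at hy'
    obtain ⟨k, l, heq⟩ := hy'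
    have h1 : k • ((a : ℕ) : ZMod m) = 0 := by
      have := congrArg Prod.fst heq
      simpa using this
    have h2 : k • ((c : ℕ) : ZMod n) + l • ((b : ℕ) : ZMod n) = y := by
      have := congrArg Prod.snd heq
      simpa using this
    have h1' : ((k * a : ℤ) : ZMod m) = 0 := by
      rw [← h1, zsmul_eq_mul]; push_cast; ring
    rw [ZMod.intCast_zmod_eq_zero_iff_dvd] at h1'
    obtain ⟨t, ht⟩ := int_div_dvd ha ha0 h1'
    have hy2 : y = (((k * c + l * b : ℤ)) : ZMod n) := by
      rw [← h2, zsmul_eq_mul, zsmul_eq_mul]; push_cast; ring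
    rw [hy2]
    rw [int_mem_zmultiples_iff hb]
    have hdvd : (b : ℤ) ∣ ((m / a : ℕ) : ℤ) * (c : ℤ) := by
      have h := Int.natCast_dvd_natCast.mpr hbc
      push_cast at h
      exact h
    have hkc : (b : ℤ) ∣ k * c := by
      rw [ht, show ((m / a : ℕ) : ℤ) * t * (c : ℤ) = t * (((m / a : ℕ) : ℤ) * (c : ℤ)) from by ring]
      exact hdvd.mul_left t
    exact dvd_add hkc (Dvd.intro_left l rfl)
  · rw [zmultiples_le]
    show ((0 : ZMod m), ((b : ℕ) : ZMod n)) ∈ Fgrp m n a b c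
    exact AddSubgroup.subset_closure (by simp)


lemma exists_triple (H : AddSubgroup (ZMod m × ZMod n)) :
    ∃ a b c : ℕ, 0 < a ∧ a ∣ m ∧ 0 < b ∧ b ∣ n ∧ c < b ∧ b ∣ (m / a) * c ∧
      Fgrp m n a b c = H := by
  obtain ⟨a, ha0, ham, hP⟩ := zmod_addSubgroup m (H.map (AddMonoidHom.fst (ZMod m) (ZMod n)))
  obtain ⟨b, hb0, hbn, hK⟩ := zmod_addSubgroup n (H.comap (AddMonoidHom.inr (ZMod m) (ZMod n)))
  have hbH : ((0 : ZMod m), ((b : ℕ) : ZMod n)) ∈ H := by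
    have h : ((b : ℕ) : ZMod n) ∈ H.comap (AddMonoidHom.inr (ZMod m) (ZMod n)) := by
      rw [hK]; exact mem_zmultiples _
    exact h
  have haP : ((a : ℕ) : ZMod m) ∈ H.map (AddMonoidHom.fst (ZMod m) (ZMod n)) := by
    rw [hP]; exact mem_zmultiples _
  rw [AddSubgroup.mem_map] at haP
  obtain ⟨g, hgH, hg1⟩ := haP
  set c₀ : ℕ := g.2.val with hc₀def
  have hc₀ : ((c₀ : ℕ) : ZMod n) = g.2 := ZMod.natCast_rightInverse g.2
  set c : ℕ := c₀ % b with hcdef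
  have hcb : c < b := Nat.mod_lt _ hb0
  have hgac : g = (((a : ℕ) : ZMod m), ((c₀ : ℕ) : ZMod n)) := by
    exact Prod.ext (by simpa using hg1) hc₀.symm
  have hacH : (((a : ℕ) : ZMod m), ((c : ℕ) : ZMod n)) ∈ H := by
    have hsub : (((a : ℕ) : ZMod m), ((c : ℕ) : ZMod n))
        = g - (c₀ / b) • ((0 : ZMod m), ((b : ℕ) : ZMod n)) := by
      rw [hgac]
      apply Prod.ext
      · show ((a : ℕ) : ZMod m) = ((a : ℕ) : ZMod m) - (c₀ / b) • (0 : ZMod m)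
        simp
      · show ((c : ℕ) : ZMod n) = ((c₀ : ℕ) : ZMod n) - (c₀ / b) • ((b : ℕ) : ZMod n)
        have hnat : c + b * (c₀ / b) = c₀ := Nat.mod_add_div c₀ b
        have hsm : (c₀ / b) • ((b : ℕ) : ZMod n) = ((b * (c₀ / b) : ℕ) : ZMod n) := by
          rw [nsmul_eq_mul]; push_cast; ring
        rw [hsm, eq_sub_iff_add_eq, ← Nat.cast_add, hnat]
    rw [hsub]
    exact H.sub_mem hgH (H.nsmul_mem hbH _)
  have hdvd : b ∣ (m / a) * c := by
    have he : (m / a) • (((a : ℕ) : ZMod m), ((c : ℕ) : ZMod n))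
        = ((0 : ZMod m), (((m / a) * c : ℕ) : ZMod n)) := by
      apply Prod.ext
      · show (m / a) • ((a : ℕ) : ZMod m) = 0
        rw [nsmul_eq_mul, ← Nat.cast_mul, Nat.div_mul_cancel ham, ZMod.natCast_self]
      · show (m / a) • ((c : ℕ) : ZMod n) = (((m / a) * c : ℕ) : ZMod n)
        rw [nsmul_eq_mul, ← Nat.cast_mul]
    have hsm : ((0 : ZMod m), (((m / a) * c : ℕ) : ZMod n)) ∈ H := by
      have h := H.nsmul_mem hacH (m / a)
      rwa [he] at h
    have h2 : (((m / a) * c : ℕ) : ZMod n) ∈ H.comap (AddMonoidHom.inr (ZMod m) (ZMod n)) := hsm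
    rw [hK] at h2
    exact (nat_mem_zmultiples_iff hbn).1 h2
  refine ⟨a, b, c, ha0, ham, hb0, hbn, hcb, hdvd, ?_⟩
  apply le_antisymm
  · rw [Fgrp, AddSubgroup.closure_le]
    intro x hx
    rcases hx with rfl | rfl
    · exact hacH
    · exact hbH
  · intro x hxH
    have hx1 : x.1 ∈ H.map (AddMonoidHom.fst (ZMod m) (ZMod n)) :=
      AddSubgroup.mem_map.2 ⟨x, hxH, rfl⟩
    rw [hP, mem_zmultiples_iff] at hx1
    obtain ⟨k, hk⟩ := hx1
    set z := x - k • (((a : ℕ) : ZMod m), ((c : ℕ) : ZMod n)) with hz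
    have hzH : z ∈ H := H.sub_mem hxH (H.zsmul_mem hacH k)
    have hz1 : z.1 = 0 := by
      show x.1 - k • ((a : ℕ) : ZMod m) = 0
      rw [hk]
      simp
    have hz2 : z.2 ∈ H.comap (AddMonoidHom.inr (ZMod m) (ZMod n)) := by
      show ((0 : ZMod m), z.2) ∈ H
      have : ((0 : ZMod m), z.2) = z := Prod.ext hz1.symm rfl
      rwa [this]
    rw [hK, mem_zmultiples_iff] at hz2
    obtain ⟨l, hl⟩ := hz2
    rw [Fgrp, AddSubgroup.mem_closure_pair]
    refine ⟨k, l, ?_⟩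
    apply Prod.ext
    · show k • ((a : ℕ) : ZMod m) + l • (0 : ZMod m) = x.1
      rw [hk]; simp
    · show k • ((c : ℕ) : ZMod n) + l • ((b : ℕ) : ZMod n) = x.2
      rw [hl]
      show k • ((c : ℕ) : ZMod n) + (x.2 - k • ((c : ℕ) : ZMod n)) = x.2
      ring


lemma zmultiples_nat_inj {N : ℕ} [NeZero N] {a a' : ℕ} (ha : a ∣ N) (ha' : a' ∣ N)
    (h : zmultiples ((a : ℕ) : ZMod N) = zmultiples ((a' : ℕ) : ZMod N)) : a = a' := by
  have hc : addOrderOf ((a : ℕ) : ZMod N) = addOrderOf ((a' : ℕ) : ZMod N) := by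
    rw [← Nat.card_zmultiples, ← Nat.card_zmultiples, h]
  rw [ZMod.addOrderOf_coe _ (NeZero.ne N), ZMod.addOrderOf_coe _ (NeZero.ne N),
    Nat.gcd_eq_right ha, Nat.gcd_eq_right ha'] at hc
  calc a = N / (N / a) := (Nat.div_div_self ha (NeZero.ne N)).symm
    _ = N / (N / a') := by rw [hc]
    _ = a' := Nat.div_div_self ha' (NeZero.ne N)

lemma triple_inj {a b c a' b' c' : ℕ} (ha0 : 0 < a) (ha : a ∣ m) (hb0 : 0 < b) (hb : b ∣ n)
    (hcb : c < b) (hbc : b ∣ (m / a) * c)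
    (ha0' : 0 < a') (ha' : a' ∣ m) (hb0' : 0 < b') (hb' : b' ∣ n)
    (hcb' : c' < b') (hbc' : b' ∣ (m / a') * c')
    (h : Fgrp m n a b c = Fgrp m n a' b' c') : a = a' ∧ b = b' ∧ c = c' := by
  have hA : a = a' := by
    apply zmultiples_nat_inj ha ha'
    rw [← map_fst_Fgrp (n := n) a b c, ← map_fst_Fgrp (n := n) a' b' c', h]
  subst hA
  have hB : b = b' := by
    apply zmultiples_nat_inj hb hb'
    rw [← comap_inr_Fgrp ha ha0.ne' hb hbc, ← comap_inr_Fgrp ha ha0.ne' hb' hbc', h]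
  subst hB
  refine ⟨rfl, rfl, ?_⟩
  have hmem : (((a : ℕ) : ZMod m), ((c : ℕ) : ZMod n)) ∈ Fgrp m n a b c' := by
    rw [← h]
    exact AddSubgroup.subset_closure (by simp)
  rw [Fgrp, AddSubgroup.mem_closure_pair] at hmem
  obtain ⟨k, l, heq⟩ := hmem
  have h1 : k • ((a : ℕ) : ZMod m) = ((a : ℕ) : ZMod m) := by
    have := congrArg Prod.fst heq
    simpa using this
  have h2 : k • ((c' : ℕ) : ZMod n) + l • ((b : ℕ) : ZMod n) = ((c : ℕ) : ZMod n) := by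
    have := congrArg Prod.snd heq
    simpa using this
  have h1' : (((k - 1) * a : ℤ) : ZMod m) = 0 := by
    push_cast
    rw [sub_mul, ← zsmul_eq_mul, h1]
    push_cast
    ring
  rw [ZMod.intCast_zmod_eq_zero_iff_dvd] at h1'
  obtain ⟨t, ht⟩ := int_div_dvd ha ha0.ne' h1'
  have h2' : (Int.cast ((c : ℤ) - (c' : ℤ)) : ZMod n) = (((k - 1) * c' + l * b : ℤ) : ZMod n) := by
    push_cast
    rw [← h2, zsmul_eq_mul, zsmul_eq_mul]
    push_cast
    ring
  have hdvd2 : (b : ℤ) ∣ (c : ℤ) - (c' : ℤ) := by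
    rw [← int_mem_zmultiples_iff hb (j := (c : ℤ) - (c' : ℤ))]
    rw [h2']
    rw [int_mem_zmultiples_iff hb]
    have hd1 : (b : ℤ) ∣ (k - 1) * c' := by
      rw [ht, show ((m / a : ℕ) : ℤ) * t * (c' : ℤ) = t * (((m / a : ℕ) : ℤ) * (c' : ℤ)) from by
        ring]
      have hh := Int.natCast_dvd_natCast.mpr hbc'
      push_cast at hh
      exact hh.mul_left t
    exact dvd_add hd1 (Dvd.intro_left l rfl)
  have habs : (c : ℤ) - (c' : ℤ) = 0 := by
    apply Int.eq_zero_of_abs_lt_dvd hdvd2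
    rw [abs_lt]
    omega
  omega


lemma exponent_Fgrp {a b c : ℕ} (ha : a ∣ m) (hb : b ∣ n) :
    AddMonoid.exponent (Fgrp m n a b c) = Nat.lcm (m / a) (n / Nat.gcd b c) := by
  rw [Fgrp, exponent_closure_pair, Prod.addOrderOf_mk, Prod.addOrderOf_mk]
  rw [ZMod.addOrderOf_coe _ (NeZero.ne m), ZMod.addOrderOf_coe _ (NeZero.ne n),
    ZMod.addOrderOf_coe _ (NeZero.ne n), addOrderOf_zero]
  rw [Nat.gcd_eq_right ha, Nat.gcd_eq_right hb, Nat.lcm_one_left]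
  rw [Nat.lcm_assoc, lcm_lcm_eq (NeZero.ne n) hb]


end

theorem stmt_15 (m n : ℕ) (hm : 1 ≤ m) (hn : 1 ≤ n) :
    ∑ᶠ H : AddSubgroup (ZMod m × ZMod n), AddMonoid.exponent H =
      (∑ d ∈ m.divisors, d) * (∑ d ∈ n.divisors, d) := by
  haveI : NeZero m := ⟨by omega⟩
  haveI : NeZero n := ⟨by omega⟩
  haveI : Finite (AddSubgroup (ZMod m × ZMod n)) :=
    Finite.of_injective _ (SetLike.coe_injective (A := AddSubgroup (ZMod m × ZMod n)))
  haveI := Fintype.ofFinite (AddSubgroup (ZMod m × ZMod n))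
  rw [finsum_eq_sum_of_fintype]
  classical
  have hbij : ∑ H : AddSubgroup (ZMod m × ZMod n), AddMonoid.exponent H
      = ∑ t ∈ (m.divisors ×ˢ n.divisors ×ˢ Finset.range n).filter
          (fun t => t.2.2 < t.2.1 ∧ t.2.1 ∣ (m / t.1) * t.2.2),
          Nat.lcm (m / t.1) (n / Nat.gcd t.2.1 t.2.2) := by
    symm
    apply Finset.sum_bij (i := fun t _ => Fgrp m n t.1 t.2.1 t.2.2)
    · intros
      exact Finset.mem_univ _
    · rintro ⟨a, b, c⟩ h₁ ⟨a', b', c'⟩ h₂ heq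
      simp only [Finset.mem_filter, Finset.mem_product, Finset.mem_range,
        Nat.mem_divisors] at h₁ h₂
      obtain ⟨⟨⟨ham, -⟩, ⟨hbn, -⟩, -⟩, hcb, hbc⟩ := h₁
      obtain ⟨⟨⟨ham', -⟩, ⟨hbn', -⟩, -⟩, hcb', hbc'⟩ := h₂
      have ha0 : 0 < a := Nat.pos_of_ne_zero (by rintro rfl; exact (NeZero.ne m) (zero_dvd_iff.1 ham))
      have hb0 : 0 < b := Nat.pos_of_ne_zero (by rintro rfl; exact (NeZero.ne n) (zero_dvd_iff.1 hbn))
      have ha0' : 0 < a' := Nat.pos_of_ne_zero (by rintro rfl; exact (NeZero.ne m) (zero_dvd_iff.1 ham'))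
      have hb0' : 0 < b' := Nat.pos_of_ne_zero (by rintro rfl; exact (NeZero.ne n) (zero_dvd_iff.1 hbn'))
      obtain ⟨e1, e2, e3⟩ := triple_inj ha0 ham hb0 hbn hcb hbc ha0' ham' hb0' hbn' hcb' hbc' heq
      simp [e1, e2, e3]
    · intro H _
      obtain ⟨a, b, c, ha0, ham, hb0, hbn, hcb, hbc, hFH⟩ := exists_triple H
      refine ⟨(a, b, c), ?_, hFH⟩
      simp only [Finset.mem_filter, Finset.mem_product, Finset.mem_range, Nat.mem_divisors]
      exact ⟨⟨⟨ham, NeZero.ne m⟩, ⟨hbn, NeZero.ne n⟩,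
        lt_of_lt_of_le hcb (Nat.le_of_dvd (Nat.pos_of_ne_zero (NeZero.ne n)) hbn)⟩, hcb, hbc⟩
    · rintro ⟨a, b, c⟩ h₁
      simp only [Finset.mem_filter, Finset.mem_product, Finset.mem_range,
        Nat.mem_divisors] at h₁
      obtain ⟨⟨⟨ham, -⟩, ⟨hbn, -⟩, -⟩, -, -⟩ := h₁
      exact (exponent_Fgrp ham hbn).symm
  rw [hbij, sum_product_filter]
  have hstep : ∀ a ∈ m.divisors,
      (∑ x ∈ (n.divisors ×ˢ Finset.range n).filter
        (fun x => x.2 < x.1 ∧ x.1 ∣ (m / a) * x.2),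
        Nat.lcm (m / a) (n / Nat.gcd x.1 x.2))
      = (m / a) * ∑ d ∈ n.divisors, d := by
    intro a ha
    obtain ⟨ham, hm0⟩ := Nat.mem_divisors.1 ha
    have ha0 : 0 < a := Nat.pos_of_ne_zero (by rintro rfl; exact hm0 (zero_dvd_iff.1 ham))
    have hApos : 0 < m / a := Nat.div_pos (Nat.le_of_dvd (Nat.pos_of_ne_zero hm0) ham) ha0
    rw [pair_key_identity (m / a) n hApos (NeZero.ne n)]
  refine Eq.trans (Finset.sum_congr rfl hstep) ?_
  rw [← Finset.sum_mul]
  congr 1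
  exact Nat.sum_div_divisors m id
end

section
/- The total number s(m,n) of subgroups of Z_m × Z_n equals ∑_{i | m} ∑_{j | n} gcd(i,j). -/
open AddSubgroup

-- classification of subgroups of ZMod k
lemma zmod_sub_eq (k : ℕ) (hk : k ≠ 0) (A : AddSubgroup (ZMod k)) :
    ∃ d, d ∈ k.divisors ∧ A = zmultiples ((d : ℕ) : ZMod k) := by
  obtain ⟨g, hg⟩ := Int.subgroup_cyclic (A.comap (Int.castAddHom (ZMod k)))
  rw [← AddSubgroup.zmultiples_eq_closure] at hg
  have hkmem : (k : ℤ) ∈ A.comap (Int.castAddHom (ZMod k)) := by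
    simp [AddSubgroup.mem_comap]
  rw [hg, Int.mem_zmultiples_iff] at hkmem
  have hd : g.natAbs ∣ k := by
    have := Int.natAbs_dvd_natAbs.mpr hkmem
    simpa using this
  have hd0 : g.natAbs ≠ 0 := by
    rintro h0
    rw [Int.natAbs_eq_zero] at h0
    subst h0
    simp at hkmem
    omega
  refine ⟨g.natAbs, Nat.mem_divisors.mpr ⟨hd, hk⟩, ?_⟩
  have hA : A = (A.comap (Int.castAddHom (ZMod k))).map (Int.castAddHom (ZMod k)) :=
    (AddSubgroup.map_comap_eq_self_of_surjective ZMod.intCast_surjective A).symm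
  rw [hA, hg, ← Int.zmultiples_natAbs, AddMonoidHom.map_zmultiples]
  congr 1
  show (((g.natAbs : ℕ) : ℤ) : ZMod k) = ((g.natAbs : ℕ) : ZMod k)
  rw [Int.cast_natCast]

-- uniqueness
lemma zmod_zmult_inj {k d1 d2 : ℕ} (hk : k ≠ 0) (h1 : d1 ∣ k) (h2 : d2 ∣ k)
    (h : zmultiples ((d1 : ℕ) : ZMod k) = zmultiples ((d2 : ℕ) : ZMod k)) : d1 = d2 := by
  have hc : Nat.card (zmultiples ((d1 : ℕ) : ZMod k)) = Nat.card (zmultiples ((d2 : ℕ) : ZMod k)) := by rw [h]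
  rw [Nat.card_zmultiples, Nat.card_zmultiples, ZMod.addOrderOf_coe _ hk,
    ZMod.addOrderOf_coe _ hk, Nat.gcd_eq_right h1, Nat.gcd_eq_right h2] at hc
  calc d1 = k / (k / d1) := (Nat.div_div_self h1 hk).symm
    _ = k / (k / d2) := by rw [hc]
    _ = d2 := Nat.div_div_self h2 hk

-- kernel of castHom description
lemma mem_zmult_iff_cast {n e : ℕ} (hn : n ≠ 0) (he : e ∣ n) (y : ZMod n) :
    y ∈ zmultiples ((e : ℕ) : ZMod n) ↔ ZMod.castHom he (ZMod e) y = 0 := by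
  haveI : NeZero n := ⟨hn⟩
  constructor
  · rintro ⟨c, rfl⟩
    rw [map_zsmul]
    simp
  · intro h
    have h2 : (y.val : ZMod e) = 0 := by
      rw [ZMod.natCast_val, ← ZMod.castHom_apply (h := he), h]
    rw [ZMod.natCast_eq_zero_iff] at h2
    obtain ⟨t, ht⟩ := h2
    refine ⟨(t : ℤ), ?_⟩
    have : ((y.val : ℕ) : ZMod n) = y := by
      rw [ZMod.natCast_val, ZMod.cast_id]
    rw [← this, ht]
    show ((t : ℤ) • ((e : ℕ) : ZMod n)) = ((e * t : ℕ) : ZMod n)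
    rw [zsmul_eq_mul]
    push_cast
    ring

-- cardinality of torsion in ZMod e
lemma card_torsion (e k : ℕ) (he : e ≠ 0) :
    Nat.card {b : ZMod e // ((k : ℕ) : ZMod e) * b = 0} = Nat.gcd k e := by
  haveI : NeZero e := ⟨he⟩
  set f : ZMod e →+ ZMod e := AddMonoidHom.mulLeft ((k : ℕ) : ZMod e) with hf
  have hker : Nat.card {b : ZMod e // ((k : ℕ) : ZMod e) * b = 0} = Nat.card f.ker := by
    apply Nat.card_congr
    exact Equiv.subtypeEquivRight (fun b => by simp [hf, AddMonoidHom.mem_ker])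
  have hrange : f.range = zmultiples ((k : ℕ) : ZMod e) := by
    ext x
    simp only [AddMonoidHom.mem_range, AddSubgroup.mem_zmultiples_iff]
    constructor
    · rintro ⟨y, rfl⟩
      refine ⟨(y.val : ℤ), ?_⟩
      rw [zsmul_eq_mul]
      push_cast
      rw [ZMod.natCast_val, ZMod.cast_id]
      simp [hf, mul_comm]
    · rintro ⟨c, rfl⟩
      refine ⟨(c : ZMod e), ?_⟩
      simp [hf, zsmul_eq_mul, mul_comm]
  have hcr : Nat.card f.range = e / Nat.gcd e k := by
    rw [hrange, Nat.card_zmultiples, ZMod.addOrderOf_coe _ he]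
  have key : e = Nat.card f.range * Nat.card f.ker := by
    conv_lhs => rw [← Nat.card_zmod e]
    rw [AddSubgroup.card_eq_card_quotient_mul_card_addSubgroup f.ker,
      Nat.card_congr (QuotientAddGroup.quotientKerEquivRange f).toEquiv]
  rw [hcr] at key
  rw [hker]
  have hg : Nat.gcd e k ∣ e := Nat.gcd_dvd_left e k
  have hpos : 0 < e / Nat.gcd e k := Nat.div_pos (Nat.le_of_dvd (Nat.pos_of_ne_zero he) hg) (Nat.pos_of_ne_zero (Nat.gcd_ne_zero_left he))
  have hmul : e / Nat.gcd e k * Nat.gcd e k = e := Nat.div_mul_cancel hg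
  rw [Nat.gcd_comm k e]
  exact Nat.eq_of_mul_eq_mul_left hpos (by omega)

def psi (m n a e : ℕ) (b : ZMod e) : AddSubgroup (ZMod m × ZMod n) :=
  zmultiples (((a : ℕ) : ZMod m), ((b.val : ℕ) : ZMod n)) ⊔
    zmultiples ((0 : ZMod m), ((e : ℕ) : ZMod n))

lemma mem_psi {m n : ℕ} (a e : ℕ) (b : ZMod e) (p : ZMod m × ZMod n) :
    p ∈ psi m n a e b ↔ ∃ c d : ℤ,
      p.1 = c • ((a : ℕ) : ZMod m) ∧ p.2 = c • ((b.val : ℕ) : ZMod n) + d • ((e : ℕ) : ZMod n) := by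
  rw [psi, AddSubgroup.mem_sup]
  constructor
  · rintro ⟨y, ⟨c, rfl⟩, z, ⟨d, rfl⟩, rfl⟩
    refine ⟨c, d, ?_, ?_⟩ <;> simp [Prod.smul_mk]
  · rintro ⟨c, d, h1, h2⟩
    refine ⟨c • _, ⟨c, rfl⟩, d • _, ⟨d, rfl⟩, ?_⟩
    rw [Prod.ext_iff]
    constructor <;> simp [h1, h2, zsmul_eq_mul]

lemma addOrderOf_a {m a : ℕ} (hm : m ≠ 0) (ha : a ∣ m) :
    addOrderOf ((a : ℕ) : ZMod m) = m / a := by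
  rw [ZMod.addOrderOf_coe _ hm, Nat.gcd_eq_right ha]

lemma psi_comap_inr {m n : ℕ} (hm : m ≠ 0) (hn : n ≠ 0) {a e : ℕ} (ha : a ∣ m) (he : e ∣ n)
    (b : ZMod e) (hb : ((m / a : ℕ) : ZMod e) * b = 0) :
    (psi m n a e b).comap (AddMonoidHom.inr (ZMod m) (ZMod n)) = zmultiples ((e : ℕ) : ZMod n) := by
  ext y
  rw [AddSubgroup.mem_comap]
  constructor
  · intro hy
    rw [mem_psi] at hy
    obtain ⟨c, d, h1, h2⟩ := hy
    simp only [AddMonoidHom.inr_apply] at h1 h2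
    have hc : ((m / a : ℕ) : ℤ) ∣ c := by
      rw [← addOrderOf_a hm ha, addOrderOf_dvd_iff_zsmul_eq_zero]
      exact h1.symm
    obtain ⟨c', rfl⟩ := hc
    rw [mul_smul] at h2
    -- (m/a) • b.val-cast ∈ zmultiples e
    have hmem : ((m / a : ℕ) : ℤ) • ((b.val : ℕ) : ZMod n) ∈ zmultiples ((e : ℕ) : ZMod n) := by
      rw [mem_zmult_iff_cast hn he, map_zsmul]
      have : (ZMod.castHom he (ZMod e)) ((b.val : ℕ) : ZMod n) = b := by
        haveI : NeZero e := ⟨by rintro rfl; exact hn (zero_dvd_iff.mp he)⟩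
        rw [map_natCast, ZMod.natCast_val, ZMod.cast_id]
      rw [this, zsmul_eq_mul, Int.cast_natCast]
      exact hb
    rw [h2]
    refine AddSubgroup.add_mem _ ?_ (AddSubgroup.zsmul_mem _ (AddSubgroup.mem_zmultiples _) d)
    rw [smul_comm]
    exact AddSubgroup.zsmul_mem _ hmem c'
  · rintro ⟨c, rfl⟩
    rw [mem_psi]
    exact ⟨0, c, by simp, by simp⟩

lemma psi_map_fst {m n : ℕ} (a e : ℕ) (b : ZMod e) :
    (psi m n a e b).map (AddMonoidHom.fst (ZMod m) (ZMod n)) = zmultiples ((a : ℕ) : ZMod m) := by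
  rw [psi, AddSubgroup.map_sup, AddMonoidHom.map_zmultiples, AddMonoidHom.map_zmultiples]
  simp

lemma psi_cast_snd {m n : ℕ} (hm : m ≠ 0) (hn : n ≠ 0) {a e : ℕ} (ha : a ∣ m) (he : e ∣ n)
    (b : ZMod e) (hb : ((m / a : ℕ) : ZMod e) * b = 0) (y : ZMod n)
    (hy : ((((a : ℕ)) : ZMod m), y) ∈ psi m n a e b) : ZMod.castHom he (ZMod e) y = b := by
  haveI : NeZero e := ⟨by rintro rfl; exact hn (zero_dvd_iff.mp he)⟩
  rw [mem_psi] at hy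
  obtain ⟨c, d, h1x, h2x⟩ := hy
  have h1 : ((a : ℕ) : ZMod m) = c • ((a : ℕ) : ZMod m) := h1x
  have h2 : y = c • ((b.val : ℕ) : ZMod n) + d • ((e : ℕ) : ZMod n) := h2x
  have h3 : (c - 1) • ((a : ℕ) : ZMod m) = 0 := by
    rw [sub_smul, one_smul, ← h1, sub_self]
  have hc : ((m / a : ℕ) : ℤ) ∣ (c - 1) := by
    rw [← addOrderOf_a hm ha, addOrderOf_dvd_iff_zsmul_eq_zero]
    exact h3
  obtain ⟨t, ht⟩ := hc
  have hbv : (ZMod.castHom he (ZMod e)) ((b.val : ℕ) : ZMod n) = b := by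
    rw [map_natCast, ZMod.natCast_val, ZMod.cast_id]
  have hkb : ((m / a : ℕ) : ℤ) • b = 0 := by
    rw [zsmul_eq_mul, Int.cast_natCast]
    exact hb
  have hcb : c • b = b := by
    have : c = 1 + ((m / a : ℕ) : ℤ) * t := by omega
    rw [this, add_smul, one_smul, mul_smul, smul_comm, hkb, smul_zero, add_zero]
  calc ZMod.castHom he (ZMod e) y
      = c • b + d • ((ZMod.castHom he (ZMod e)) ((e : ℕ) : ZMod n)) := by
        rw [h2, map_add, map_zsmul, map_zsmul, hbv]
    _ = b := by rw [map_natCast, ZMod.natCast_self, smul_zero, add_zero, hcb]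

lemma psi_mem_self {m n : ℕ} (a e : ℕ) (b : ZMod e) :
    ((((a : ℕ)) : ZMod m), ((b.val : ℕ) : ZMod n)) ∈ psi m n a e b := by
  rw [mem_psi]
  exact ⟨1, 0, by simp, by simp⟩

lemma exists_psi {m n : ℕ} (hm : m ≠ 0) (hn : n ≠ 0) (H : AddSubgroup (ZMod m × ZMod n)) :
    ∃ a ∈ m.divisors, ∃ e ∈ n.divisors, ∃ b : ZMod e,
      ((m / a : ℕ) : ZMod e) * b = 0 ∧ H = psi m n a e b := by
  haveI : NeZero m := ⟨hm⟩
  haveI : NeZero n := ⟨hn⟩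
  obtain ⟨a, haDiv, hA⟩ := zmod_sub_eq m hm (H.map (AddMonoidHom.fst (ZMod m) (ZMod n)))
  obtain ⟨e, heDiv, hE⟩ := zmod_sub_eq n hn (H.comap (AddMonoidHom.inr (ZMod m) (ZMod n)))
  have ha : a ∣ m := (Nat.mem_divisors.mp haDiv).1
  have he : e ∣ n := (Nat.mem_divisors.mp heDiv).1
  haveI : NeZero e := ⟨by rintro rfl; exact hn (zero_dvd_iff.mp he)⟩
  have hmemE : ∀ x : ZMod n, x ∈ zmultiples ((e : ℕ) : ZMod n) ↔ ((0 : ZMod m), x) ∈ H := by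
    intro x
    rw [← hE, AddSubgroup.mem_comap]
    rfl
  have : ((a : ℕ) : ZMod m) ∈ H.map (AddMonoidHom.fst (ZMod m) (ZMod n)) :=
    hA ▸ AddSubgroup.mem_zmultiples _
  obtain ⟨p, hpH, hp1x⟩ := this
  have hp1 : p.1 = ((a : ℕ) : ZMod m) := hp1x
  set b := ZMod.castHom he (ZMod e) p.2 with hbdef
  have hb : ((m / a : ℕ) : ZMod e) * b = 0 := by
    have h1 : ((m / a : ℕ)) • p ∈ H := AddSubgroup.nsmul_mem H hpH _
    have h2 : ((m / a : ℕ)) • p = ((0 : ZMod m), (m / a : ℕ) • p.2) := by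
      apply Prod.ext
      · show (m / a : ℕ) • p.1 = 0
        rw [hp1, nsmul_eq_mul]
        rw [← Nat.cast_mul, Nat.div_mul_cancel ha, ZMod.natCast_self]
      · rfl
    rw [h2] at h1
    have h3 : ((m / a : ℕ)) • p.2 ∈ zmultiples ((e : ℕ) : ZMod n) := (hmemE _).mpr h1
    rw [mem_zmult_iff_cast hn he, map_nsmul, ← hbdef, nsmul_eq_mul] at h3
    exact h3
  set y₀ : ZMod n := ((b.val : ℕ) : ZMod n) with hy₀
  have hy₀H : ((((a : ℕ)) : ZMod m), y₀) ∈ H := by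
    have hdiff : y₀ - p.2 ∈ zmultiples ((e : ℕ) : ZMod n) := by
      rw [mem_zmult_iff_cast hn he, map_sub, map_natCast, ZMod.natCast_val, ZMod.cast_id,
        ← hbdef, sub_self]
    have h0 : ((0 : ZMod m), y₀ - p.2) ∈ H := (hmemE _).mp hdiff
    have := H.add_mem hpH h0
    have heq : p + ((0 : ZMod m), y₀ - p.2) = ((((a : ℕ)) : ZMod m), y₀) := by
      apply Prod.ext
      · show p.1 + 0 = _
        rw [add_zero, hp1]
      · show p.2 + (y₀ - p.2) = y₀
        ring
    rwa [heq] at this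
  refine ⟨a, haDiv, e, heDiv, b, hb, ?_⟩
  apply le_antisymm
  · intro q hq
    rw [mem_psi]
    have hq1 : q.1 ∈ zmultiples ((a : ℕ) : ZMod m) := by
      rw [← hA]
      exact ⟨q, hq, rfl⟩
    obtain ⟨c, hcx⟩ := hq1
    have hc : c • ((a : ℕ) : ZMod m) = q.1 := hcx
    have hsub : q - c • ((((a : ℕ)) : ZMod m), y₀) ∈ H :=
      H.sub_mem hq (AddSubgroup.zsmul_mem H hy₀H c)
    have hfst : (q - c • ((((a : ℕ)) : ZMod m), y₀)).1 = 0 := by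
      show q.1 - c • ((a : ℕ) : ZMod m) = 0
      rw [hc, sub_self]
    have hq2 : (0, q.2 - c • y₀) ∈ H := by
      have : q - c • ((((a : ℕ)) : ZMod m), y₀) = ((0 : ZMod m), q.2 - c • y₀) := by
        apply Prod.ext
        · exact hfst
        · rfl
      rwa [this] at hsub
    obtain ⟨d, hdx⟩ := (hmemE _).mpr hq2
    have hd : d • ((e : ℕ) : ZMod n) = q.2 - c • y₀ := hdx
    exact ⟨c, d, hc.symm, by rw [hd]; ring⟩
  · rw [psi]
    apply sup_le
    · exact (AddSubgroup.zmultiples_le).mpr hy₀H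
    · refine (AddSubgroup.zmultiples_le).mpr ?_
      exact (hmemE _).mp (AddSubgroup.mem_zmultiples _)

theorem stmt_16 (m n : ℕ) (hm : 1 ≤ m) (hn : 1 ≤ n) :
    Nat.card (AddSubgroup (ZMod m × ZMod n)) =
      ∑ i ∈ m.divisors, ∑ j ∈ n.divisors, Nat.gcd i j := by
  have hm0 : m ≠ 0 := by omega
  have hn0 : n ≠ 0 := by omega
  classical
  haveI : ∀ x : {x // x ∈ n.divisors}, NeZero (x.1 : ℕ) :=
    fun x => ⟨(Nat.pos_of_mem_divisors x.2).ne'⟩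
  set T := (a : {x // x ∈ m.divisors}) × (e : {x // x ∈ n.divisors}) ×
      {b : ZMod (e.1 : ℕ) // ((m / (a.1 : ℕ) : ℕ) : ZMod (e.1 : ℕ)) * b = 0} with hT
  have hbij : Function.Bijective
      (fun t : T => psi m n t.1.1 t.2.1.1 t.2.2.1) := by
    constructor
    · rintro ⟨⟨a, haD⟩, ⟨e, heD⟩, ⟨b, hb⟩⟩ ⟨⟨a', haD'⟩, ⟨e', heD'⟩, ⟨b', hb'⟩⟩ h
      simp only at h
      have ha : a ∣ m := (Nat.mem_divisors.mp haD).1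
      have ha' : a' ∣ m := (Nat.mem_divisors.mp haD').1
      have he : e ∣ n := (Nat.mem_divisors.mp heD).1
      have he' : e' ∣ n := (Nat.mem_divisors.mp heD').1
      have hee : e = e' := by
        apply zmod_zmult_inj hn0 he he'
        rw [← psi_comap_inr hm0 hn0 ha he b hb, h, psi_comap_inr hm0 hn0 ha' he' b' hb']
      subst hee
      have haa : a = a' := by
        apply zmod_zmult_inj hm0 ha ha'
        rw [← psi_map_fst (m := m) (n := n) a e b, h, psi_map_fst]
      subst haa
      have hbb : b = b' := by
        have hmem : ((((a : ℕ)) : ZMod m), ((b.val : ℕ) : ZMod n)) ∈ psi m n a e b' := by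
          rw [← h]
          exact psi_mem_self a e b
        have h1 := psi_cast_snd hm0 hn0 ha he b' hb' _ hmem
        haveI : NeZero e := ⟨(Nat.pos_of_mem_divisors heD).ne'⟩
        rwa [map_natCast, ZMod.natCast_val, ZMod.cast_id] at h1
      subst hbb
      rfl
    · intro H
      obtain ⟨a, haD, e, heD, b, hb, hH⟩ := exists_psi hm0 hn0 H
      exact ⟨⟨⟨a, haD⟩, ⟨e, heD⟩, ⟨b, hb⟩⟩, hH.symm⟩
  have hcard : Nat.card (AddSubgroup (ZMod m × ZMod n)) = Nat.card T :=
    (Nat.card_eq_of_bijective _ hbij).symm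
  rw [hcard]
  have hstep : Nat.card T =
      ∑ a ∈ m.divisors, ∑ e ∈ n.divisors, Nat.gcd (m / a) e := by
    rw [Nat.card_eq_fintype_card, Fintype.card_sigma]
    rw [← Finset.sum_coe_sort m.divisors (fun a => ∑ e ∈ n.divisors, Nat.gcd (m / a) e)]
    apply Finset.sum_congr rfl
    intro a _
    rw [Fintype.card_sigma]
    rw [← Finset.sum_coe_sort n.divisors (fun e => Nat.gcd (m / (a : ℕ)) e)]
    apply Finset.sum_congr rfl
    intro e _
    rw [← Nat.card_eq_fintype_card, card_torsion _ _ (Nat.pos_of_mem_divisors e.2).ne']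
  rw [hstep, ← Nat.sum_div_divisors m (fun i => ∑ j ∈ n.divisors, Nat.gcd i j)]
end

section
/- The map (a,b,c,d,ℓ) ↦ K_{a,b,c,d,ℓ} is a bijection between J_{m,n} and the set of subgroups of Z_m × Z_n, where K_{a,b,c,d,ℓ} = {(i·m/a, i·ℓ·n/c + j·n/d) : 0 ≤ i ≤ a−1, 0 ≤ j ≤ d−1}; moreover K_{a,b,c,d,ℓ} has order a·d and exponent lcm(a,c). -/
/-- The index set `J_{m,n}` of quintuples `(a,b,c,d,ℓ)`. -/
def Jset (m n : ℕ) : Set (ℕ × ℕ × ℕ × ℕ × ℕ) :=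
  {t | match t with
    | (a, b, c, d, l) =>
      0 < a ∧ 0 < b ∧ 0 < c ∧ 0 < d ∧ 0 < l ∧
        a ∣ m ∧ b ∣ a ∧ c ∣ n ∧ d ∣ c ∧ a / b = c / d ∧
        l ≤ a / b ∧ Nat.gcd l (a / b) = 1}

/-- The subset `K_{a,b,c,d,ℓ}` of `Z_m × Z_n`. -/
def Kset (m n a c d l : ℕ) : Set (ZMod m × ZMod n) :=
  {x | ∃ i < a, ∃ j < d,
    x = (((i * (m / a) : ℕ) : ZMod m), ((i * l * (n / c) + j * (n / d) : ℕ) : ZMod n))}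


open AddSubgroup

namespace Stmt18

lemma nsmul_cast {m : ℕ} (k v : ℕ) : k • ((v : ℕ) : ZMod m) = ((k * v : ℕ) : ZMod m) := by
  rw [nsmul_eq_mul]; push_cast; ring

lemma zsmul_cast {m : ℕ} (t : ℤ) (v : ℕ) : t • ((v : ℕ) : ZMod m) = (((t * v : ℤ)) : ZMod m) := by
  rw [zsmul_eq_mul]; push_cast; ring




lemma addOrder_div_cast {m a : ℕ} (hm : m ≠ 0) (ha : a ∣ m) :
    addOrderOf ((↑(m / a) : ZMod m)) = a := by
  rw [ZMod.addOrderOf_coe _ hm, Nat.gcd_eq_right (Nat.div_dvd_of_dvd ha),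
    Nat.div_div_self ha hm]

lemma zsmul_reduce {G : Type*} [AddCommGroup G] {x y : G} {A D B : ℕ} (hA : 0 < A) (hD : 0 < D)
    (hax : (A:ℤ) • x = (B:ℤ) • y) (hdy : (D:ℤ) • y = 0) (i j : ℤ) :
    ∃ i₀ j₀ : ℕ, i₀ < A ∧ j₀ < D ∧ i • x + j • y = (i₀:ℤ) • x + (j₀:ℤ) • y := by
  set q : ℤ := i / A with hq
  set r : ℤ := i % A with hr
  set s : ℤ := j + q * B with hs
  set q₂ : ℤ := s / D with hq₂
  set r₂ : ℤ := s % D with hr₂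
  have hi : i = (A:ℤ) * q + r := (Int.mul_ediv_add_emod i A).symm
  have hj : s = (D:ℤ) * q₂ + r₂ := (Int.mul_ediv_add_emod s D).symm
  have h1 : i • x = q • ((A:ℤ) • x) + r • x := by
    calc i • x = ((A:ℤ) * q + r) • x := by rw [← hi]
      _ = q • ((A:ℤ) • x) + r • x := by rw [add_smul, mul_comm, mul_smul]
  have h2 : s • y = q₂ • ((D:ℤ) • y) + r₂ • y := by
    calc s • y = ((D:ℤ) * q₂ + r₂) • y := by rw [← hj]
      _ = q₂ • ((D:ℤ) • y) + r₂ • y := by rw [add_smul, mul_comm, mul_smul]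
  refine ⟨r.toNat, r₂.toNat, ?_, ?_, ?_⟩
  · rw [Int.toNat_lt' hA]
    exact Int.emod_lt_of_pos _ (by exact_mod_cast hA)
  · rw [Int.toNat_lt' hD]
    exact Int.emod_lt_of_pos _ (by exact_mod_cast hD)
  · rw [Int.toNat_of_nonneg (Int.emod_nonneg _ (by exact_mod_cast hA.ne'))]
    rw [Int.toNat_of_nonneg (Int.emod_nonneg _ (by exact_mod_cast hD.ne'))]
    calc i • x + j • y
        = (q • ((A:ℤ) • x) + r • x) + j • y := by rw [← h1]
      _ = r • x + (q • ((B:ℤ) • y) + j • y) := by rw [hax]; abel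
      _ = r • x + s • y := by
          rw [smul_smul, ← add_smul, add_comm (q * (B:ℤ)) j, show j + q * (B:ℤ) = s from hs.symm]
      _ = r • x + (q₂ • ((D:ℤ) • y) + r₂ • y) := by rw [← h2]
      _ = r • x + r₂ • y := by rw [hdy, smul_zero, zero_add]

lemma zsmul_to_nat {G : Type*} [AddCommGroup G] (g : G) {C : ℕ} (hC : 0 < C)
    (hg : (C:ℤ) • g = 0) (t : ℤ) : ∃ t₀ : ℕ, t₀ < C ∧ t • g = (t₀:ℤ) • g := by
  obtain ⟨i₀, j₀, _, hj₀, h⟩ := zsmul_reduce (x := (0:G)) (y := g) (B := 0) hC hC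
    (by simp) hg 0 t
  refine ⟨j₀, hj₀, ?_⟩
  simpa using h

lemma addSubgroup_eq_of_le_of_card_le {G : Type*} [AddGroup G] {H K : AddSubgroup G}
    (hle : H ≤ K) (hc : Nat.card K ≤ Nat.card H) (hfin : (K : Set G).Finite) : H = K := by
  apply SetLike.coe_injective
  apply Set.eq_of_subset_of_ncard_le hle ?_ hfin
  rw [← Nat.card_coe_set_eq, ← Nat.card_coe_set_eq]
  exact hc

lemma zmod_addSubgroup {m : ℕ} (hm : m ≠ 0) (K : AddSubgroup (ZMod m)) :
    Nat.card K ∣ m ∧ K = zmultiples ((↑(m / Nat.card K) : ZMod m)) := by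
  haveI : NeZero m := ⟨hm⟩
  set k := Nat.card K with hk
  have hk0 : 0 < k := Nat.card_pos
  have hdvd : k ∣ m := by
    have := AddSubgroup.card_dvd_of_le (le_top : K ≤ ⊤)
    rwa [AddSubgroup.card_top, Nat.card_zmod] at this
  refine ⟨hdvd, ?_⟩
  set ψ : ZMod m →+ ZMod m := AddMonoidHom.mk' (fun x => k • x) (fun x y => smul_add k x y)
    with hψ
  have hψapp : ∀ x : ZMod m, ψ x = k • x := fun x => rfl
  have hrange : ψ.range = zmultiples ((k : ZMod m)) := by
    ext z
    simp only [AddMonoidHom.mem_range, mem_zmultiples_iff]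
    constructor
    · rintro ⟨x, rfl⟩
      obtain ⟨v, rfl⟩ := ZMod.natCast_zmod_surjective (n := m) x
      refine ⟨(v : ℤ), ?_⟩
      rw [hψapp, zsmul_cast, nsmul_cast]
      push_cast; ring_nf
    · rintro ⟨t, rfl⟩
      refine ⟨t • (1 : ZMod m), ?_⟩
      rw [hψapp, smul_comm]
      congr 1
      rw [nsmul_eq_mul, mul_one]
  have hcard_range : Nat.card ψ.range = m / k := by
    rw [hrange, Nat.card_zmultiples, ZMod.addOrderOf_coe _ hm, Nat.gcd_eq_right hdvd]
  have hcard_ker : Nat.card ψ.ker = k := by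
    have h1 := AddSubgroup.card_eq_card_quotient_mul_card_addSubgroup ψ.ker
    have h2 : Nat.card (ZMod m ⧸ ψ.ker) = Nat.card ψ.range :=
      Nat.card_congr (QuotientAddGroup.quotientKerEquivRange ψ).toEquiv
    rw [Nat.card_zmod, h2, hcard_range] at h1
    have hmk : m = (m / k) * k := (Nat.div_mul_cancel hdvd).symm
    have hmk0 : 0 < m / k := Nat.div_pos (Nat.le_of_dvd (Nat.pos_of_ne_zero hm) hdvd) hk0
    exact (Nat.eq_of_mul_eq_mul_left hmk0 (by rw [← h1, ← hmk])).symm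
  have hzk : zmultiples ((↑(m / k) : ZMod m)) ≤ ψ.ker := by
    intro z hz
    obtain ⟨t, rfl⟩ := mem_zmultiples_iff.mp hz
    rw [AddMonoidHom.mem_ker, hψapp, smul_comm, nsmul_cast, Nat.mul_div_cancel' hdvd,
      ZMod.natCast_self, smul_zero]
  have hker_eq : zmultiples ((↑(m / k) : ZMod m)) = ψ.ker := by
    apply addSubgroup_eq_of_le_of_card_le hzk _ (Set.toFinite _)
    rw [hcard_ker, Nat.card_zmultiples, addOrder_div_cast hm hdvd]
  have hKker : K ≤ ψ.ker := by
    intro z hz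
    rw [AddMonoidHom.mem_ker, hψapp]
    have h0 : ((k • (⟨z, hz⟩ : K) : K) : ZMod m) = k • z := rfl
    rw [← h0, card_nsmul_eq_zero', AddSubgroup.coe_zero]
  rw [hker_eq]
  apply addSubgroup_eq_of_le_of_card_le hKker _ (Set.toFinite _)
  rw [hcard_ker]

lemma zsmul_natCast_eq {m : ℕ} (k v : ℕ) :
    (k : ℤ) • ((v : ℕ) : ZMod m) = ((k * v : ℕ) : ZMod m) := by
  rw [natCast_zsmul, nsmul_cast]

/-- The generators. -/
def xg (m n a c l : ℕ) : ZMod m × ZMod n :=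
  (((m / a : ℕ) : ZMod m), ((l * (n / c) : ℕ) : ZMod n))

def yg (m n d : ℕ) : ZMod m × ZMod n := ((0 : ZMod m), ((n / d : ℕ) : ZMod n))

def Ksub (m n a c d l : ℕ) : AddSubgroup (ZMod m × ZMod n) :=
  closure {xg m n a c l, yg m n d}

lemma hax_lemma {m n a b c d l e : ℕ} (ham : a ∣ m) (hae : a = b * e)
    (hnd : n / d = e * (n / c)) :
    (a : ℤ) • xg m n a c l = ((b * l : ℕ) : ℤ) • yg m n d := by
  rw [natCast_zsmul, natCast_zsmul]
  unfold xg yg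
  rw [Prod.smul_mk, Prod.smul_mk, smul_zero, nsmul_cast, nsmul_cast, nsmul_cast]
  refine Prod.ext ?_ ?_
  · show ((a * (m / a) : ℕ) : ZMod m) = 0
    rw [Nat.mul_div_cancel' ham, ZMod.natCast_self]
  · show ((a * (l * (n / c)) : ℕ) : ZMod n) = ((b * l * (n / d) : ℕ) : ZMod n)
    congr 1
    rw [hae, hnd]; ring

lemma hdy_lemma {m n d : ℕ} (hdn : d ∣ n) : (d : ℤ) • yg m n d = 0 := by
  rw [natCast_zsmul]
  unfold yg
  rw [Prod.smul_mk, smul_zero, nsmul_cast]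
  refine Prod.ext rfl ?_
  show ((d * (n / d) : ℕ) : ZMod n) = 0
  rw [Nat.mul_div_cancel' hdn, ZMod.natCast_self]

lemma Ksub_coe {m n a c d l : ℕ} (ha0 : 0 < a) (hd0 : 0 < d)
    (B : ℕ) (hax : (a : ℤ) • xg m n a c l = (B : ℤ) • yg m n d)
    (hdy : (d : ℤ) • yg m n d = 0) :
    ((Ksub m n a c d l : AddSubgroup (ZMod m × ZMod n)) : Set (ZMod m × ZMod n)) =
      Kset m n a c d l := by
  ext z
  simp only [Ksub, SetLike.mem_coe, AddSubgroup.mem_closure_pair]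
  constructor
  · rintro ⟨i, j, rfl⟩
    obtain ⟨i₀, j₀, hi₀, hj₀, heq⟩ := zsmul_reduce ha0 hd0 hax hdy i j
    refine ⟨i₀, hi₀, j₀, hj₀, ?_⟩
    rw [heq]
    simp only [xg, yg, Prod.smul_mk, Prod.mk_add_mk, Prod.mk.injEq, zsmul_eq_mul, smul_zero]
    constructor <;> push_cast <;> ring
  · rintro ⟨i, hi, j, hj, rfl⟩
    refine ⟨(i : ℤ), (j : ℤ), ?_⟩
    simp only [xg, yg, Prod.smul_mk, Prod.mk_add_mk, Prod.mk.injEq, zsmul_eq_mul, smul_zero]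
    constructor <;> push_cast <;> ring


lemma cast_inj_of_lt {m a : ℕ} (hm : m ≠ 0) (ha : a ∣ m) (ha0 : 0 < a) {i₁ i₂ : ℕ}
    (h₁ : i₁ < a) (h₂ : i₂ < a)
    (h : ((i₁ * (m / a) : ℕ) : ZMod m) = ((i₂ * (m / a) : ℕ) : ZMod m)) : i₁ = i₂ := by
  have hma : 0 < m / a := Nat.div_pos (Nat.le_of_dvd (Nat.pos_of_ne_zero hm) ha) ha0
  have hmod := (ZMod.natCast_eq_natCast_iff _ _ _).mp h
  have hmw : a * (m / a) = m := Nat.mul_div_cancel' ha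
  have hlt₁ : i₁ * (m / a) < m := lt_of_lt_of_le ((Nat.mul_lt_mul_right hma).mpr h₁) (le_of_eq hmw)
  have hlt₂ : i₂ * (m / a) < m := lt_of_lt_of_le ((Nat.mul_lt_mul_right hma).mpr h₂) (le_of_eq hmw)
  exact Nat.eq_of_mul_eq_mul_right hma (hmod.eq_of_lt_of_lt hlt₁ hlt₂)

lemma Ksub_card {m n a c d l : ℕ} (hm : m ≠ 0) (hn : n ≠ 0) (ha0 : 0 < a) (hd0 : 0 < d)
    (ham : a ∣ m) (hcn : c ∣ n) (hdc : d ∣ c)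
    (hcoe : ((Ksub m n a c d l : AddSubgroup (ZMod m × ZMod n)) : Set (ZMod m × ZMod n)) =
      Kset m n a c d l) :
    Nat.card (Ksub m n a c d l) = a * d := by
  have hdn : d ∣ n := hdc.trans hcn
  have hma : 0 < m / a := Nat.div_pos (Nat.le_of_dvd (Nat.pos_of_ne_zero hm) ham) ha0
  have hnd : 0 < n / d := Nat.div_pos (Nat.le_of_dvd (Nat.pos_of_ne_zero hn) hdn) hd0
  rw [← SetLike.coe_sort_coe, hcoe, Nat.card_coe_set_eq]
  have himg : Kset m n a c d l =
      (fun p : ℕ × ℕ => ((((p.1 * (m / a) : ℕ)) : ZMod m),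
        (((p.1 * l * (n / c) + p.2 * (n / d) : ℕ)) : ZMod n))) ''
      (↑(Finset.range a ×ˢ Finset.range d) : Set (ℕ × ℕ)) := by
    ext z
    simp only [Kset, Set.mem_setOf_eq, Set.mem_image, Finset.coe_product, Finset.coe_range,
      Set.mem_prod, Set.mem_Iio, Prod.exists]
    constructor
    · rintro ⟨i, hi, j, hj, hz⟩
      exact ⟨i, j, ⟨hi, hj⟩, hz.symm⟩
    · rintro ⟨i, j, ⟨hi, hj⟩, hz⟩
      exact ⟨i, hi, j, hj, hz.symm⟩
  rw [himg, Set.ncard_image_of_injOn, Set.ncard_coe_finset, Finset.card_product,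
    Finset.card_range, Finset.card_range]
  rintro ⟨i₁, j₁⟩ h₁ ⟨i₂, j₂⟩ h₂ heq
  simp only [Finset.coe_product, Finset.coe_range, Set.mem_prod, Set.mem_Iio] at h₁ h₂
  rw [Prod.mk.injEq] at heq
  obtain ⟨hf, hs⟩ := heq
  have hia : i₁ = i₂ := cast_inj_of_lt hm ham ha0 h₁.1 h₂.1 hf
  subst hia
  have hjd : j₁ = j₂ := by
    refine cast_inj_of_lt hn hdn hd0 h₁.2 h₂.2 ?_
    push_cast at hs ⊢
    linear_combination hs
  rw [hjd]

lemma dvd_mul_div {N A K r : ℕ} (hA : A ∣ N) (hAK : A ∣ K) : N ∣ K * (r * (N / A)) := by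
  obtain ⟨k, hk⟩ := hAK
  refine ⟨k * r, ?_⟩
  rw [hk, show A * k * (r * (N / A)) = A * (N / A) * (k * r) by ring, Nat.mul_div_cancel' hA]

lemma bezout_comb {n c d l e : ℕ} (hnd : n / d = e * (n / c)) (hgcd : Nat.gcd l e = 1) :
    (Nat.gcdA l e) • (((l * (n / c) : ℕ)) : ZMod n) + (Nat.gcdB l e) • (((n / d : ℕ)) : ZMod n)
      = ((n / c : ℕ) : ZMod n) := by
  have hbez : (l : ℤ) * Nat.gcdA l e + (e : ℤ) * Nat.gcdB l e = 1 := by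
    have := Nat.gcd_eq_gcd_ab l e
    rw [hgcd] at this
    push_cast at this
    linarith
  set w : ℕ := n / c with hw
  rw [hnd, zsmul_cast, zsmul_cast, ← Int.cast_add]
  have h2 : Nat.gcdA l e * ((l * w : ℕ) : ℤ) + Nat.gcdB l e * ((e * w : ℕ) : ℤ)
      = ((w : ℕ) : ℤ) := by
    push_cast
    linear_combination (w : ℤ) * hbez
  rw [h2, Int.cast_natCast]

lemma Ksub_exponent {m n a c d l e : ℕ} (hm : m ≠ 0) (hn : n ≠ 0)
    (ham : a ∣ m) (hcn : c ∣ n) (hdc : d ∣ c)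
    (hnd : n / d = e * (n / c)) (hgcd : Nat.gcd l e = 1)
    (hcoe : ((Ksub m n a c d l : AddSubgroup (ZMod m × ZMod n)) : Set (ZMod m × ZMod n)) =
      Kset m n a c d l) :
    AddMonoid.exponent (Ksub m n a c d l) = Nat.lcm a c := by
  haveI : NeZero m := ⟨hm⟩
  haveI : NeZero n := ⟨hn⟩
  have hdn : d ∣ n := hdc.trans hcn
  apply Nat.dvd_antisymm
  · apply AddMonoid.exponent_dvd_of_forall_nsmul_eq_zero
    rintro ⟨z, hz⟩
    have hz' : z ∈ Kset m n a c d l := by rw [← hcoe]; exact hz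
    obtain ⟨i, hi, j, hj, rfl⟩ := hz'
    rw [Subtype.ext_iff]
    show Nat.lcm a c • ((((i * (m / a) : ℕ)) : ZMod m), (((i * l * (n / c) + j * (n / d) : ℕ)) : ZMod n)) = 0
    rw [Prod.smul_mk, nsmul_cast, nsmul_cast]
    refine Prod.ext ?_ ?_
    · show ((Nat.lcm a c * (i * (m / a)) : ℕ) : ZMod m) = 0
      rw [ZMod.natCast_eq_zero_iff]
      exact dvd_mul_div ham (Nat.dvd_lcm_left a c)
    · show ((Nat.lcm a c * (i * l * (n / c) + j * (n / d)) : ℕ) : ZMod n) = 0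
      rw [ZMod.natCast_eq_zero_iff, Nat.mul_add]
      exact dvd_add (dvd_mul_div hcn (Nat.dvd_lcm_right a c))
        (dvd_mul_div hdn (hdc.trans (Nat.dvd_lcm_right a c)))
  · have hxmem : xg m n a c l ∈ Ksub m n a c d l :=
      subset_closure (Set.mem_insert _ _)
    have hymem : yg m n d ∈ Ksub m n a c d l :=
      subset_closure (Set.mem_insert_of_mem _ rfl)
    apply Nat.lcm_dvd
    · set φ := (AddMonoidHom.fst (ZMod m) (ZMod n)).comp (Ksub m n a c d l).subtype with hφ
      have h1 : addOrderOf (φ ⟨xg m n a c l, hxmem⟩) ∣ AddMonoid.exponent (Ksub m n a c d l) :=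
        dvd_trans (addOrderOf_map_dvd φ _) (AddMonoid.addOrder_dvd_exponent _)
      have h2 : φ ⟨xg m n a c l, hxmem⟩ = ((m / a : ℕ) : ZMod m) := rfl
      rwa [h2, addOrder_div_cast hm ham] at h1
    · set zc : ZMod m × ZMod n :=
        (Nat.gcdA l e) • xg m n a c l + (Nat.gcdB l e) • yg m n d with hzc
      have hzmem : zc ∈ Ksub m n a c d l :=
        AddSubgroup.add_mem _ (AddSubgroup.zsmul_mem _ hxmem _) (AddSubgroup.zsmul_mem _ hymem _)
      set ψ := (AddMonoidHom.snd (ZMod m) (ZMod n)).comp (Ksub m n a c d l).subtype with hψ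
      have h1 : addOrderOf (ψ ⟨zc, hzmem⟩) ∣ AddMonoid.exponent (Ksub m n a c d l) :=
        dvd_trans (addOrderOf_map_dvd ψ _) (AddMonoid.addOrder_dvd_exponent _)
      have h2 : ψ ⟨zc, hzmem⟩ = ((n / c : ℕ) : ZMod n) := by
        show (Nat.gcdA l e) • (((l * (n / c) : ℕ)) : ZMod n)
            + (Nat.gcdB l e) • (((n / d : ℕ)) : ZMod n) = ((n / c : ℕ) : ZMod n)
        exact bezout_comb hnd hgcd
      rwa [h2, addOrder_div_cast hn hcn] at h1

lemma Ksub_map_fst (m n a c d l : ℕ) :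
    (Ksub m n a c d l).map (AddMonoidHom.fst (ZMod m) (ZMod n))
      = zmultiples (((m / a : ℕ)) : ZMod m) := by
  rw [Ksub, AddMonoidHom.map_closure]
  have himg : (⇑(AddMonoidHom.fst (ZMod m) (ZMod n)) '' {xg m n a c l, yg m n d})
      = {((m / a : ℕ) : ZMod m), (0 : ZMod m)} := by
    rw [Set.image_insert_eq, Set.image_singleton]
    rfl
  rw [himg, zmultiples_eq_closure]
  apply le_antisymm
  · rw [closure_le]
    rintro z hz
    simp only [Set.mem_insert_iff, Set.mem_singleton_iff] at hz
    rcases hz with rfl | rfl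
    · exact subset_closure rfl
    · exact AddSubgroup.zero_mem _
  · apply AddSubgroup.closure_mono
    intro w hw
    simp only [Set.mem_singleton_iff] at hw
    simp [hw]

lemma Ksub_map_snd {m n a c d l e : ℕ} (hnd : n / d = e * (n / c))
    (hgcd : Nat.gcd l e = 1) :
    (Ksub m n a c d l).map (AddMonoidHom.snd (ZMod m) (ZMod n))
      = zmultiples (((n / c : ℕ)) : ZMod n) := by
  rw [Ksub, AddMonoidHom.map_closure]
  have himg : (⇑(AddMonoidHom.snd (ZMod m) (ZMod n)) '' {xg m n a c l, yg m n d})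
      = {((l * (n / c) : ℕ) : ZMod n), ((n / d : ℕ) : ZMod n)} := by
    rw [Set.image_insert_eq, Set.image_singleton]
    rfl
  rw [himg]
  apply le_antisymm
  · rw [closure_le]
    rintro z hz
    simp only [Set.mem_insert_iff, Set.mem_singleton_iff] at hz
    rcases hz with rfl | rfl
    · rw [SetLike.mem_coe, mem_zmultiples_iff]
      exact ⟨(l : ℤ), zsmul_natCast_eq l (n / c)⟩
    · rw [SetLike.mem_coe, mem_zmultiples_iff]
      exact ⟨(e : ℤ), by rw [zsmul_natCast_eq, hnd]⟩
  · intro z hz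
    obtain ⟨t, rfl⟩ := mem_zmultiples_iff.mp hz
    apply AddSubgroup.zsmul_mem
    exact (AddSubgroup.mem_closure_pair).mpr
      ⟨Nat.gcdA l e, Nat.gcdB l e, bezout_comb hnd hgcd⟩

lemma Ksub_comap_inr {m n a c d l : ℕ} (hm : m ≠ 0) (ha0 : 0 < a) (hd0 : 0 < d)
    (ham : a ∣ m)
    (hcoe : ((Ksub m n a c d l : AddSubgroup (ZMod m × ZMod n)) : Set (ZMod m × ZMod n)) =
      Kset m n a c d l) :
    (Ksub m n a c d l).comap (AddMonoidHom.inr (ZMod m) (ZMod n))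
      = zmultiples (((n / d : ℕ)) : ZMod n) := by
  ext z
  rw [mem_comap]
  have happ : (AddMonoidHom.inr (ZMod m) (ZMod n)) z = ((0 : ZMod m), z) := rfl
  rw [happ]
  constructor
  · intro hz
    have hz' : ((0 : ZMod m), z) ∈ Kset m n a c d l := by rw [← hcoe]; exact hz
    obtain ⟨i, hi, j, hj, hp⟩ := hz'
    rw [Prod.mk.injEq] at hp
    obtain ⟨h1, h2⟩ := hp
    have hi0 : i = 0 := by
      refine cast_inj_of_lt hm ham ha0 hi ha0 ?_
      rw [Nat.zero_mul, Nat.cast_zero]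
      exact h1.symm
    subst hi0
    rw [mem_zmultiples_iff]
    refine ⟨(j : ℤ), ?_⟩
    rw [zsmul_natCast_eq, h2]
    norm_num
  · intro hz
    obtain ⟨t, rfl⟩ := mem_zmultiples_iff.mp hz
    refine (AddSubgroup.mem_closure_pair).mpr ⟨0, t, ?_⟩
    rw [zero_smul, zero_add, yg, Prod.smul_mk, smul_zero]

lemma card_decomp_fst {m n : ℕ} (H : AddSubgroup (ZMod m × ZMod n)) :
    Nat.card H = Nat.card (H.map (AddMonoidHom.fst (ZMod m) (ZMod n)))
      * Nat.card (H.comap (AddMonoidHom.inr (ZMod m) (ZMod n))) := by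
  set φ := (AddMonoidHom.fst (ZMod m) (ZMod n)).comp H.subtype with hφ
  have h1 := AddSubgroup.card_eq_card_quotient_mul_card_addSubgroup φ.ker
  have h2 : Nat.card (↥H ⧸ φ.ker) = Nat.card φ.range :=
    Nat.card_congr (QuotientAddGroup.quotientKerEquivRange φ).toEquiv
  have h3 : φ.range = H.map (AddMonoidHom.fst (ZMod m) (ZMod n)) := by
    ext z
    simp only [AddMonoidHom.mem_range, AddSubgroup.mem_map]
    constructor
    · rintro ⟨⟨w, hw⟩, rfl⟩
      exact ⟨w, hw, rfl⟩
    · rintro ⟨w, hw, rfl⟩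
      exact ⟨⟨w, hw⟩, rfl⟩
  have h4 : Nat.card φ.ker = Nat.card (H.comap (AddMonoidHom.inr (ZMod m) (ZMod n))) := by
    apply Nat.card_congr
    refine ⟨fun z => ⟨z.1.1.2, ?_⟩, fun w => ⟨⟨((0 : ZMod m), w.1), w.2⟩, ?_⟩, ?_, ?_⟩
    · have h0 : (z.1 : ZMod m × ZMod n).1 = 0 := z.2
      have : ((0 : ZMod m), (z.1 : ZMod m × ZMod n).2) = (z.1 : ZMod m × ZMod n) :=
        Prod.ext h0.symm rfl
      show (AddMonoidHom.inr (ZMod m) (ZMod n)) (z.1 : ZMod m × ZMod n).2 ∈ H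
      have happ : (AddMonoidHom.inr (ZMod m) (ZMod n)) (z.1 : ZMod m × ZMod n).2
          = ((0 : ZMod m), (z.1 : ZMod m × ZMod n).2) := rfl
      rw [happ, this]
      exact z.1.2
    · exact AddMonoidHom.mem_ker.mpr rfl
    · intro z
      apply Subtype.ext
      apply Subtype.ext
      have h0 : (z.1 : ZMod m × ZMod n).1 = 0 := z.2
      exact Prod.ext h0.symm rfl
    · intro w
      apply Subtype.ext
      rfl
  rw [h1, h2, h3, h4]

lemma card_decomp_snd {m n : ℕ} (H : AddSubgroup (ZMod m × ZMod n)) :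
    Nat.card H = Nat.card (H.map (AddMonoidHom.snd (ZMod m) (ZMod n)))
      * Nat.card (H.comap (AddMonoidHom.inl (ZMod m) (ZMod n))) := by
  set φ := (AddMonoidHom.snd (ZMod m) (ZMod n)).comp H.subtype with hφ
  have h1 := AddSubgroup.card_eq_card_quotient_mul_card_addSubgroup φ.ker
  have h2 : Nat.card (↥H ⧸ φ.ker) = Nat.card φ.range :=
    Nat.card_congr (QuotientAddGroup.quotientKerEquivRange φ).toEquiv
  have h3 : φ.range = H.map (AddMonoidHom.snd (ZMod m) (ZMod n)) := by
    ext z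
    simp only [AddMonoidHom.mem_range, AddSubgroup.mem_map]
    constructor
    · rintro ⟨⟨w, hw⟩, rfl⟩
      exact ⟨w, hw, rfl⟩
    · rintro ⟨w, hw, rfl⟩
      exact ⟨⟨w, hw⟩, rfl⟩
  have h4 : Nat.card φ.ker = Nat.card (H.comap (AddMonoidHom.inl (ZMod m) (ZMod n))) := by
    apply Nat.card_congr
    refine ⟨fun z => ⟨z.1.1.1, ?_⟩, fun w => ⟨⟨(w.1, (0 : ZMod n)), w.2⟩, ?_⟩, ?_, ?_⟩
    · have h0 : (z.1 : ZMod m × ZMod n).2 = 0 := z.2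
      have : ((z.1 : ZMod m × ZMod n).1, (0 : ZMod n)) = (z.1 : ZMod m × ZMod n) :=
        Prod.ext rfl h0.symm
      show (AddMonoidHom.inl (ZMod m) (ZMod n)) (z.1 : ZMod m × ZMod n).1 ∈ H
      have happ : (AddMonoidHom.inl (ZMod m) (ZMod n)) (z.1 : ZMod m × ZMod n).1
          = ((z.1 : ZMod m × ZMod n).1, (0 : ZMod n)) := rfl
      rw [happ, this]
      exact z.1.2
    · exact AddMonoidHom.mem_ker.mpr rfl
    · intro z
      apply Subtype.ext
      apply Subtype.ext
      have h0 : (z.1 : ZMod m × ZMod n).2 = 0 := z.2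
      exact Prod.ext rfl h0.symm
    · intro w
      apply Subtype.ext
      rfl
  rw [h1, h2, h3, h4]

lemma nd_eq {n c d e : ℕ} (hd0 : 0 < d) (hcn : c ∣ n) (hce : c = d * e) :
    n / d = e * (n / c) := by
  have h1 : n = d * (e * (n / c)) := by rw [← mul_assoc, ← hce, Nat.mul_div_cancel' hcn]
  calc n / d = d * (e * (n / c)) / d := by rw [← h1]
    _ = e * (n / c) := Nat.mul_div_cancel_left _ hd0

lemma master {m n a b c d l : ℕ} (hm : m ≠ 0) (hn : n ≠ 0)
    (hJ : (a, b, c, d, l) ∈ Jset m n) :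
    ((Ksub m n a c d l : AddSubgroup (ZMod m × ZMod n)) : Set (ZMod m × ZMod n)) =
        Kset m n a c d l ∧
      Nat.card (Ksub m n a c d l) = a * d ∧
      AddMonoid.exponent (Ksub m n a c d l) = Nat.lcm a c ∧
      (Ksub m n a c d l).map (AddMonoidHom.fst (ZMod m) (ZMod n))
        = zmultiples (((m / a : ℕ)) : ZMod m) ∧
      (Ksub m n a c d l).map (AddMonoidHom.snd (ZMod m) (ZMod n))
        = zmultiples (((n / c : ℕ)) : ZMod n) ∧
      (Ksub m n a c d l).comap (AddMonoidHom.inr (ZMod m) (ZMod n))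
        = zmultiples (((n / d : ℕ)) : ZMod n) := by
  obtain ⟨ha0, hb0, hc0, hd0, hl0, ham, hba, hcn, hdc, habcd, hle, hgcd⟩ := hJ
  have hce : c = d * (c / d) := (Nat.mul_div_cancel' hdc).symm
  have hnd : n / d = (c / d) * (n / c) := nd_eq hd0 hcn hce
  have hae : a = b * (c / d) := by
    rw [← habcd]
    exact (Nat.mul_div_cancel' hba).symm
  rw [habcd] at hgcd
  have hax := hax_lemma (l := l) (d := d) ham hae hnd
  have hdy := hdy_lemma (m := m) (hdc.trans hcn)
  have hcoe := Ksub_coe ha0 hd0 (b * l) hax hdy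
  exact ⟨hcoe, Ksub_card hm hn ha0 hd0 ham hcn hdc hcoe,
    Ksub_exponent hm hn ham hcn hdc hnd hgcd hcoe,
    Ksub_map_fst m n a c d l, Ksub_map_snd hnd hgcd,
    Ksub_comap_inr hm ha0 hd0 ham hcoe⟩

def F (m n : ℕ) (t : Jset m n) : AddSubgroup (ZMod m × ZMod n) :=
  Ksub m n t.1.1 t.1.2.2.1 t.1.2.2.2.1 t.1.2.2.2.2

end Stmt18

theorem stmt_18 (m n : ℕ) (hm : 1 ≤ m) (hn : 1 ≤ n) :
    ∃ f : Jset m n ≃ AddSubgroup (ZMod m × ZMod n),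
      ∀ t : Jset m n,
        ((f t : AddSubgroup (ZMod m × ZMod n)) : Set (ZMod m × ZMod n)) =
            Kset m n t.1.1 t.1.2.2.1 t.1.2.2.2.1 t.1.2.2.2.2 ∧
          Nat.card (f t) = t.1.1 * t.1.2.2.2.1 ∧
          AddMonoid.exponent (f t) = Nat.lcm t.1.1 t.1.2.2.1 := by
  have hm0 : m ≠ 0 := by omega
  have hn0 : n ≠ 0 := by omega
  haveI : NeZero m := ⟨hm0⟩
  haveI : NeZero n := ⟨hn0⟩
  open Stmt18 AddSubgroup in
  have hinj : Function.Injective (Stmt18.F m n) := by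
    rintro ⟨⟨a, b, c, d, l⟩, hJ⟩ ⟨⟨a', b', c', d', l'⟩, hJ'⟩ hFeq
    have hFeq' : Ksub m n a c d l = Ksub m n a' c' d' l' := hFeq
    obtain ⟨hcoe, hcard, hexp, hfst, hsnd, hinr⟩ := master hm0 hn0 hJ
    obtain ⟨hcoe', hcard', hexp', hfst', hsnd', hinr'⟩ := master hm0 hn0 hJ'
    obtain ⟨ha0, hb0, hc0, hd0, hl0, ham, hba, hcn, hdc, habcd, hle, hgcd⟩ := hJ
    obtain ⟨ha0', hb0', hc0', hd0', hl0', ham', hba', hcn', hdc', habcd', hle', hgcd'⟩ := hJ'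
    have haa : a = a' := by
      have h1 : zmultiples (((m / a : ℕ)) : ZMod m) = zmultiples (((m / a' : ℕ)) : ZMod m) := by
        rw [← hfst, ← hfst', hFeq']
      have h2 : Nat.card (zmultiples (((m / a : ℕ)) : ZMod m))
          = Nat.card (zmultiples (((m / a' : ℕ)) : ZMod m)) := by rw [h1]
      rwa [Nat.card_zmultiples, Nat.card_zmultiples, addOrder_div_cast hm0 ham,
        addOrder_div_cast hm0 ham'] at h2
    have hcc : c = c' := by
      have h1 : zmultiples (((n / c : ℕ)) : ZMod n) = zmultiples (((n / c' : ℕ)) : ZMod n) := by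
        rw [← hsnd, ← hsnd', hFeq']
      have h2 : Nat.card (zmultiples (((n / c : ℕ)) : ZMod n))
          = Nat.card (zmultiples (((n / c' : ℕ)) : ZMod n)) := by rw [h1]
      rwa [Nat.card_zmultiples, Nat.card_zmultiples, addOrder_div_cast hn0 hcn,
        addOrder_div_cast hn0 hcn'] at h2
    have hdd : d = d' := by
      have h1 : zmultiples (((n / d : ℕ)) : ZMod n) = zmultiples (((n / d' : ℕ)) : ZMod n) := by
        rw [← hinr, ← hinr', hFeq']
      have h2 : Nat.card (zmultiples (((n / d : ℕ)) : ZMod n))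
          = Nat.card (zmultiples (((n / d' : ℕ)) : ZMod n)) := by rw [h1]
      rwa [Nat.card_zmultiples, Nat.card_zmultiples, addOrder_div_cast hn0 (hdc.trans hcn),
        addOrder_div_cast hn0 (hdc'.trans hcn')] at h2
    subst haa; subst hcc; subst hdd
    have hbb : b = b' := by
      have h1 : a / b = a / b' := by rw [habcd, habcd']
      calc b = a / (a / b) := (Nat.div_div_self hba ha0.ne').symm
        _ = a / (a / b') := by rw [h1]
        _ = b' := Nat.div_div_self hba' ha0.ne'
    subst hbb
    have hKeq : Kset m n a c d l = Kset m n a c d l' := by rw [← hcoe, ← hcoe', hFeq']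
    have he0 : 0 < c / d := Nat.div_pos (Nat.le_of_dvd hc0 hdc) hd0
    have hll : l = l' := by
      rw [habcd] at hle hgcd
      rw [habcd'] at hle' hgcd'
      by_cases he1 : c / d = 1
      · omega
      · have hcd2 : 2 ≤ c / d := by omega
        have ha2 : 2 ≤ a := by
          have h1 : a = b * (a / b) := (Nat.mul_div_cancel' hba).symm
          have h2 : a / b ≤ b * (a / b) := Nat.le_mul_of_pos_left _ hb0
          omega
        have hz : (((1 * (m / a) : ℕ) : ZMod m),
            ((1 * l * (n / c) + 0 * (n / d) : ℕ) : ZMod n)) ∈ Kset m n a c d l :=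
          ⟨1, by omega, 0, hd0, rfl⟩
        rw [hKeq] at hz
        obtain ⟨i, hi, j, hj, hp⟩ := hz
        rw [Prod.mk.injEq] at hp
        obtain ⟨h1, h2⟩ := hp
        have hi1 : 1 = i := cast_inj_of_lt hm0 ham ha0 (by omega) hi h1
        rw [← hi1] at h2
        have hce : c = d * (c / d) := (Nat.mul_div_cancel' hdc).symm
        have hnd : n / d = (c / d) * (n / c) := nd_eq hd0 hcn hce
        rw [show 1 * l * (n / c) + 0 * (n / d) = l * (n / c) by ring,
          show 1 * l' * (n / c) + j * (n / d) = (l' + j * (c / d)) * (n / c) by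
            rw [hnd]; ring] at h2
        have h3 : ((l : ℤ) - ((l' + j * (c / d) : ℕ) : ℤ)) • (((n / c : ℕ)) : ZMod n) = 0 := by
          rw [sub_smul, zsmul_natCast_eq, zsmul_natCast_eq, sub_eq_zero]
          exact h2
        have h4 : ((c : ℕ) : ℤ) ∣ ((l : ℤ) - ((l' + j * (c / d) : ℕ) : ℤ)) := by
          have := addOrderOf_dvd_iff_zsmul_eq_zero.mpr h3
          rwa [addOrder_div_cast hn0 hcn] at this
        have hec : ((c / d : ℕ) : ℤ) ∣ ((c : ℕ) : ℤ) :=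
          Int.natCast_dvd_natCast.mpr (Nat.div_dvd_of_dvd hdc)
        have h5 : ((c / d : ℕ) : ℤ) ∣ ((l : ℤ) - (l' : ℤ)) := by
          have h6 := dvd_trans hec h4
          have h7 : (l : ℤ) - (l' : ℤ)
              = ((l : ℤ) - ((l' + j * (c / d) : ℕ) : ℤ)) + (j : ℤ) * ((c / d : ℕ) : ℤ) := by
            push_cast; ring
          rw [h7]
          exact dvd_add h6 ⟨(j : ℤ), by ring⟩
        have habs : |(l : ℤ) - (l' : ℤ)| < ((c / d : ℕ) : ℤ) := by
          rw [abs_lt]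
          constructor
          · have : (l' : ℤ) ≤ ((c / d : ℕ) : ℤ) := by exact_mod_cast hle'
            have hl0' : (1 : ℤ) ≤ (l : ℤ) := by exact_mod_cast hl0
            linarith
          · have : (l : ℤ) ≤ ((c / d : ℕ) : ℤ) := by exact_mod_cast hle
            have hl0'' : (1 : ℤ) ≤ (l' : ℤ) := by exact_mod_cast hl0'
            linarith
        have := Int.eq_zero_of_abs_lt_dvd h5 habs
        have : (l : ℤ) = (l' : ℤ) := by linarith
        exact_mod_cast this
    subst hll
    rfl
  have hsurj : Function.Surjective (Stmt18.F m n) := by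
    intro H
    set A := H.map (AddMonoidHom.fst (ZMod m) (ZMod n)) with hA
    set C := H.map (AddMonoidHom.snd (ZMod m) (ZMod n)) with hC
    set B := H.comap (AddMonoidHom.inl (ZMod m) (ZMod n)) with hB
    set D := H.comap (AddMonoidHom.inr (ZMod m) (ZMod n)) with hD
    set a := Nat.card A with ha
    set c := Nat.card C with hc
    set b := Nat.card B with hb
    set d := Nat.card D with hd
    obtain ⟨ham, hAeq⟩ := Stmt18.zmod_addSubgroup hm0 A
    obtain ⟨hcn, hCeq⟩ := Stmt18.zmod_addSubgroup hn0 C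
    obtain ⟨hbm, hBeq⟩ := Stmt18.zmod_addSubgroup hm0 B
    obtain ⟨hdn, hDeq⟩ := Stmt18.zmod_addSubgroup hn0 D
    rw [← ha] at ham hAeq
    rw [← hc] at hcn hCeq
    rw [← hb] at hbm hBeq
    rw [← hd] at hdn hDeq
    have ha0 : 0 < a := Nat.card_pos
    have hb0 : 0 < b := Nat.card_pos
    have hc0 : 0 < c := Nat.card_pos
    have hd0 : 0 < d := Nat.card_pos
    have hcard1 : Nat.card H = a * d := Stmt18.card_decomp_fst H
    have hcard2 : Nat.card H = c * b := Stmt18.card_decomp_snd H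
    -- d ∣ c
    have hDC : D ≤ C := by
      intro z hz
      exact ⟨((0 : ZMod m), z), hz, rfl⟩
    have hdc : d ∣ c := AddSubgroup.card_dvd_of_le hDC
    set e := c / d with he
    have hce : c = d * e := (Nat.mul_div_cancel' hdc).symm
    have he0 : 0 < e := Nat.div_pos (Nat.le_of_dvd hc0 hdc) hd0
    have had : a * d = c * b := by rw [← hcard1, ← hcard2]
    have hae : a = b * e := by
      have h1 : a * d = (b * e) * d := by rw [had, hce]; ring
      exact Nat.eq_of_mul_eq_mul_right hd0 h1
    have hba : b ∣ a := ⟨e, hae⟩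
    have hnd : n / d = e * (n / c) := Stmt18.nd_eq hd0 hcn hce
    -- pick h ∈ H with first coordinate m/a
    have hmemA : ((m / a : ℕ) : ZMod m) ∈ A := by
      rw [hAeq]
      exact mem_zmultiples _
    obtain ⟨hh, hhH, hh1⟩ := AddSubgroup.mem_map.mp hmemA
    have hh1' : hh.1 = ((m / a : ℕ) : ZMod m) := hh1
    have hsndC : hh.2 ∈ C := AddSubgroup.mem_map.mpr ⟨hh, hhH, rfl⟩
    rw [hCeq] at hsndC
    obtain ⟨t', ht'⟩ := mem_zmultiples_iff.mp hsndC
    have hgc : (c : ℤ) • (((n / c : ℕ)) : ZMod n) = 0 := by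
      apply addOrderOf_dvd_iff_zsmul_eq_zero.mp
      rw [Stmt18.addOrder_div_cast hn0 hcn]
    obtain ⟨t, htc, ht⟩ := Stmt18.zsmul_to_nat _ hc0 hgc t'
    have hht : hh.2 = ((t * (n / c) : ℕ) : ZMod n) := by
      rw [← ht', ht, Stmt18.zsmul_natCast_eq]
    -- (0, n/d) ∈ H
    have hyH : ((0 : ZMod m), ((n / d : ℕ) : ZMod n)) ∈ H := by
      have h1 : ((n / d : ℕ) : ZMod n) ∈ D := by
        rw [hDeq]
        exact mem_zmultiples _
      exact h1
    -- gcd t e = 1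
    have hq : Nat.gcd t e = 1 := by
      set q := Nat.gcd t e with hq'
      have hqe : q ∣ e := Nat.gcd_dvd_right _ _
      have hqt : q ∣ t := Nat.gcd_dvd_left _ _
      set i := e / q with hi
      obtain ⟨t₁, ht₁⟩ := hqt
      have hitH : ((0 : ZMod m), ((i * t * (n / c) : ℕ) : ZMod n)) ∈ H := by
        have hit : i * t * (n / c) = t₁ * (n / d) := by
          have h1 : i * t = e * t₁ := by
            rw [ht₁, hi, ← mul_assoc, Nat.div_mul_cancel hqe]
          rw [h1, hnd]; ring
        rw [hit]
        have h2 := AddSubgroup.zsmul_mem H hyH (t₁ : ℤ)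
        have h3 : (t₁ : ℤ) • ((0 : ZMod m), ((n / d : ℕ) : ZMod n))
            = ((0 : ZMod m), ((t₁ * (n / d) : ℕ) : ZMod n)) := by
          rw [Prod.smul_mk, smul_zero, Stmt18.zsmul_natCast_eq]
        rwa [h3] at h2
      have hwH : (((i * (m / a) : ℕ) : ZMod m), (0 : ZMod n)) ∈ H := by
        have h1 := AddSubgroup.sub_mem H (AddSubgroup.zsmul_mem H hhH (i : ℤ)) hitH
        have h2 : (i : ℤ) • hh - ((0 : ZMod m), ((i * t * (n / c) : ℕ) : ZMod n))
            = (((i * (m / a) : ℕ) : ZMod m), (0 : ZMod n)) := by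
          refine Prod.ext ?_ ?_
          · show (i : ℤ) • hh.1 - 0 = ((i * (m / a) : ℕ) : ZMod m)
            rw [sub_zero, hh1', Stmt18.zsmul_natCast_eq]
          · show (i : ℤ) • hh.2 - ((i * t * (n / c) : ℕ) : ZMod n) = 0
            rw [hht, Stmt18.zsmul_natCast_eq, sub_eq_zero]
            congr 1
            ring
        rwa [h2] at h1
      have hmemB : ((i * (m / a) : ℕ) : ZMod m) ∈ B := hwH
      rw [hBeq] at hmemB
      obtain ⟨s, hs⟩ := mem_zmultiples_iff.mp hmemB
      have hmb : m / b = e * (m / a) := by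
        have h1 : m = b * (e * (m / a)) := by
          rw [← mul_assoc, ← hae, Nat.mul_div_cancel' ham]
        calc m / b = b * (e * (m / a)) / b := by rw [← h1]
          _ = e * (m / a) := Nat.mul_div_cancel_left _ hb0
      have hs' : ((i : ℤ) - s * e) • (((m / a : ℕ)) : ZMod m) = 0 := by
        rw [sub_smul, sub_eq_zero, Stmt18.zsmul_natCast_eq, mul_smul,
          Stmt18.zsmul_natCast_eq, ← hmb, hs]
      have hdvd1 : ((a : ℕ) : ℤ) ∣ ((i : ℤ) - s * e) := by
        have h1 := addOrderOf_dvd_iff_zsmul_eq_zero.mpr hs'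
        rwa [Stmt18.addOrder_div_cast hm0 ham] at h1
      have hea : ((e : ℕ) : ℤ) ∣ ((a : ℕ) : ℤ) :=
        Int.natCast_dvd_natCast.mpr ⟨b, by rw [hae]; ring⟩
      have hdvd2 : ((e : ℕ) : ℤ) ∣ (i : ℤ) := by
        have h1 : (i : ℤ) = ((i : ℤ) - s * e) + s * e := by ring
        rw [h1]
        exact dvd_add (dvd_trans hea hdvd1) ⟨s, by ring⟩
      have hdvd3 : e ∣ i := Int.natCast_dvd_natCast.mp hdvd2
      have h1 : i ∣ e := Nat.div_dvd_of_dvd hqe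
      have h2 : i = e := Nat.dvd_antisymm h1 hdvd3
      have h3 := Nat.div_div_self hqe he0.ne'
      rw [hi] at h2
      rw [h2] at h3
      rw [Nat.div_self he0] at h3
      exact h3.symm
    -- define l
    set l := if t % e = 0 then e else t % e with hl
    have hl0 : 0 < l := by
      rw [hl]
      split
      · exact he0
      · omega
    have hle : l ≤ e := by
      rw [hl]
      split
      · exact le_rfl
      · exact le_of_lt (Nat.mod_lt _ he0)
    have hgcd_l : Nat.gcd l e = 1 := by
      rw [hl]
      split
      · rename_i h0
        have h1 : e ∣ t := Nat.dvd_of_mod_eq_zero h0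
        have h2 : e = 1 := (Nat.gcd_eq_right h1).symm.trans hq
        simp [h2]
      · rw [← Nat.gcd_rec e t, Nat.gcd_comm e t, hq]
    have hmod : ((e : ℕ) : ℤ) ∣ ((t : ℤ) - (l : ℤ)) := by
      rw [hl]
      split
      · rename_i h0
        have h1 : e ∣ t := Nat.dvd_of_mod_eq_zero h0
        obtain ⟨k, hk⟩ := h1
        exact ⟨(k : ℤ) - 1, by rw [hk]; push_cast; ring⟩
      · refine ⟨(t / e : ℕ), ?_⟩
        have h1 : e * (t / e) + t % e = t := Nat.div_add_mod t e
        have h2 : (e : ℤ) * ((t / e : ℕ) : ℤ) + ((t % e : ℕ) : ℤ) = (t : ℤ) := by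
          exact_mod_cast congrArg (Nat.cast : ℕ → ℤ) h1
        linarith
    -- x generator in H
    have hxH : Stmt18.xg m n a c l ∈ H := by
      obtain ⟨s, hs⟩ := hmod
      have h2 : Stmt18.xg m n a c l = hh - s • ((0 : ZMod m), ((n / d : ℕ) : ZMod n)) := by
        refine Prod.ext ?_ ?_
        · show ((m / a : ℕ) : ZMod m) = hh.1 - s • (0 : ZMod m)
          rw [smul_zero, sub_zero, hh1']
        · show ((l * (n / c) : ℕ) : ZMod n) = hh.2 - s • ((n / d : ℕ) : ZMod n)
          rw [hht, hnd]
          have h3 : s • ((e * (n / c) : ℕ) : ZMod n)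
              = ((t * (n / c) : ℕ) : ZMod n) - ((l * (n / c) : ℕ) : ZMod n) := by
            have h4 : ((t : ℤ) - (l : ℤ)) • (((n / c : ℕ)) : ZMod n)
                = ((t * (n / c) : ℕ) : ZMod n) - ((l * (n / c) : ℕ) : ZMod n) := by
              rw [sub_smul, Stmt18.zsmul_natCast_eq, Stmt18.zsmul_natCast_eq]
            rw [← h4, hs, mul_comm ((e : ℕ) : ℤ) s, mul_smul, Stmt18.zsmul_natCast_eq]
          rw [h3, sub_sub_cancel]
      rw [h2]
      exact AddSubgroup.sub_mem H hhH (AddSubgroup.zsmul_mem H hyH s)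
    have hJ : (a, b, c, d, l) ∈ Jset m n := by
      have habd : a / b = e := by rw [hae, Nat.mul_div_cancel_left _ hb0]
      exact ⟨ha0, hb0, hc0, hd0, hl0, ham, hba, hcn, hdc, by rw [habd, he],
        by rw [habd]; exact hle, by rw [habd]; exact hgcd_l⟩
    obtain ⟨hcoe', hcard', _⟩ := Stmt18.master hm0 hn0 hJ
    have hKle : Stmt18.Ksub m n a c d l ≤ H := by
      rw [Stmt18.Ksub, closure_le]
      rintro z hz
      simp only [Set.mem_insert_iff, Set.mem_singleton_iff] at hz
      rcases hz with rfl | rfl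
      · exact hxH
      · exact hyH
    have hfinal : Stmt18.Ksub m n a c d l = H := by
      apply Stmt18.addSubgroup_eq_of_le_of_card_le hKle _ (Set.toFinite _)
      rw [hcard', hcard1]
    exact ⟨⟨(a, b, c, d, l), hJ⟩, hfinal⟩
  refine ⟨Equiv.ofBijective (Stmt18.F m n) ⟨hinj, hsurj⟩, fun t => ?_⟩
  obtain ⟨⟨a, b, c, d, l⟩, hJ⟩ := t
  obtain ⟨h1, h2, h3, _⟩ := Stmt18.master hm0 hn0 hJ
  exact ⟨h1, h2, h3⟩
end
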